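/- arXiv:2309.08502 — 5 statements merged into one kernel-verified Lean document; each statement's English description precedes it below -/
import Mathlib

section
/- Let f = a_0 + a_1 z + ... + a_m z^m ∈ ℤ[z] be primitive, and suppose there exist reals 0 < α < β and an index j ∈ {0,...,m} with |a_j| α^j > Σ_{i≠j} |a_i| β^i. If there exist natural numbers n, d with β - d ≥ n ≥ α + d such that |f(n)|/d is prime, or is a prime power coprime to |f'(n)|, then f is irreducible in ℤ[z]. -/
open Polynomial

noncomputable def Complex.abs : AbsoluteValue ℂ ℝ := NormedField.toAbsoluteValue ℂ

theorem Complex.abs_apply (z : ℂ) : Complex.abs z = ‖z‖ := rfl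

theorem Complex.abs_intCast (n : ℤ) : Complex.abs (n : ℂ) = |(n : ℝ)| := by
  rw [Complex.abs_apply, Complex.norm_intCast]

theorem Complex.abs_natCast (n : ℕ) : Complex.abs (n : ℂ) = (n : ℝ) := by
  rw [Complex.abs_apply, Complex.norm_natCast]

theorem lemA (m : ℕ) (f : ℤ[X]) (hdeg : f.natDegree = m)
    (α β : ℝ) (j : ℕ) (hjm : j ≤ m)
    (hineq : (|f.coeff j| : ℝ) * α ^ j >
      ∑ i ∈ (Finset.range (m + 1)).erase j, (|f.coeff i| : ℝ) * β ^ i)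
    (hα : 0 ≤ α) (hαβ : α ≤ β)
    (z : ℂ) (hz : aeval z f = 0) : Complex.abs z < α ∨ β < Complex.abs z := by
  by_contra h
  push_neg at h
  obtain ⟨h1, h2⟩ := h
  have hz0 : (0:ℝ) ≤ Complex.abs z := (Complex.abs.nonneg z)
  have hev : (∑ i ∈ Finset.range (m+1), (f.coeff i : ℂ) * z ^ i) = 0 := by
    rw [← hz, aeval_def, eval₂_eq_sum_range]
    simp [hdeg]
  have hjmem : j ∈ Finset.range (m+1) := Finset.mem_range.mpr (Nat.lt_succ_of_le hjm)
  have hsplit : (f.coeff j : ℂ) * z ^ j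
      = - ∑ i ∈ (Finset.range (m+1)).erase j, (f.coeff i : ℂ) * z ^ i := by
    have := Finset.add_sum_erase _ (fun i => (f.coeff i : ℂ) * z ^ i) hjmem
    rw [hev] at this
    linear_combination this
  have key : (|f.coeff j| : ℝ) * (Complex.abs z) ^ j
      ≤ ∑ i ∈ (Finset.range (m+1)).erase j, (|f.coeff i| : ℝ) * β ^ i := by
    calc (|f.coeff j| : ℝ) * (Complex.abs z) ^ j
        = Complex.abs ((f.coeff j : ℂ) * z ^ j) := by
          rw [map_mul, map_pow]
          norm_num [Complex.abs_intCast]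
      _ = Complex.abs (∑ i ∈ (Finset.range (m+1)).erase j, (f.coeff i : ℂ) * z ^ i) := by
          rw [hsplit, AbsoluteValue.map_neg]
      _ ≤ ∑ i ∈ (Finset.range (m+1)).erase j, Complex.abs ((f.coeff i : ℂ) * z ^ i) := by
          exact Complex.abs.sum_le _ _
      _ ≤ ∑ i ∈ (Finset.range (m+1)).erase j, (|f.coeff i| : ℝ) * β ^ i := by
          apply Finset.sum_le_sum
          intro i _
          rw [map_mul, map_pow]
          have : Complex.abs (f.coeff i : ℂ) = (|f.coeff i| : ℝ) := by
            norm_num [Complex.abs_intCast]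
          rw [this]
          exact mul_le_mul_of_nonneg_left (pow_le_pow_left₀ hz0 h2 i) (by positivity)
  have : (|f.coeff j| : ℝ) * α ^ j ≤ (|f.coeff j| : ℝ) * (Complex.abs z) ^ j :=
    mul_le_mul_of_nonneg_left (pow_le_pow_left₀ hα h1 j) (by positivity)
  linarith

theorem multi (c : ℝ) (hc : 0 ≤ c) (s : Multiset ℝ) (h : ∀ x ∈ s, c < x) :
    c ^ Multiset.card s ≤ s.prod ∧ (s ≠ 0 → c ^ Multiset.card s < s.prod) := by
  induction s using Multiset.induction with
  | empty => simp
  | cons a t ih =>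
    have ha : c < a := h a (Multiset.mem_cons_self a t)
    have ht : ∀ x ∈ t, c < x := fun x hx => h x (Multiset.mem_cons_of_mem hx)
    obtain ⟨ih1, _⟩ := ih ht
    have hpos : (0:ℝ) ≤ c ^ Multiset.card t := by positivity
    constructor
    · rw [Multiset.card_cons, Multiset.prod_cons, pow_succ, mul_comm]
      exact mul_le_mul ha.le ih1 hpos (le_trans hc ha.le)
    · intro _
      rw [Multiset.card_cons, Multiset.prod_cons, pow_succ, mul_comm]
      calc c * c ^ Multiset.card t ≤ c * t.prod :=
            mul_le_mul_of_nonneg_left ih1 hc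
        _ < a * t.prod := by
            apply mul_lt_mul_of_pos_right ha
            exact Multiset.prod_pos (fun x hx => lt_of_le_of_lt hc (ht x hx))

theorem lemB (f g : ℤ[X]) (hgf : g ∣ f)
    (α β : ℝ) (hα : 0 < α)
    (hroots : ∀ z : ℂ, aeval z f = 0 → Complex.abs z < α ∨ β < Complex.abs z)
    (g1 : 1 ≤ g.natDegree)
    (n d : ℕ) (hd : 0 < d) (hnα : (n : ℝ) ≥ α + d) (hnβ : (n : ℝ) ≤ β - d) :
    (d : ℝ) ^ g.natDegree < |((g.eval (n : ℤ) : ℤ) : ℝ)| := by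
  have hg0 : g ≠ 0 := fun h => by simp [h] at g1
  set G : ℂ[X] := g.map (Int.castRingHom ℂ) with hG
  have hinj : Function.Injective (Int.castRingHom ℂ) := Int.cast_injective
  have hG0 : G ≠ 0 := (Polynomial.map_ne_zero_iff hinj).mpr hg0
  have hGdeg : G.natDegree = g.natDegree := natDegree_map_eq_of_injective hinj g
  have hsplits : Splits G := IsAlgClosed.splits G
  have hcard : Multiset.card G.roots = g.natDegree := by
    have := hsplits.natDegree_eq_card_roots
    rw [← hGdeg, this]
  -- factorization of G
  have hfact : G = C G.leadingCoeff * (G.roots.map fun a => X - C a).prod :=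
    (C_leadingCoeff_mul_prod_multiset_X_sub_C hsplits.natDegree_eq_card_roots.symm).symm
  set N : ℂ := ((n : ℤ) : ℂ) with hN
  have hevalG : G.eval N = ((g.eval (n : ℤ) : ℤ) : ℂ) := by
    rw [hG, eval_map]
    rw [eval₂_at_intCast]
    simp
  -- each root is far from N
  have hfar : ∀ r ∈ G.roots, (d : ℝ) < Complex.abs (N - r) := by
    intro r hr
    have hrG : G.eval r = 0 := (mem_roots hG0).mp hr
    have hrf : aeval r f = 0 := by
      obtain ⟨q, hq⟩ := hgf
      have hg' : aeval r g = 0 := by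
        rw [aeval_def, ← eval_map]
        exact hrG
      rw [hq, map_mul, hg', zero_mul]
    have hNabs : Complex.abs N = (n : ℝ) := by
      rw [hN]; push_cast; exact Complex.abs_natCast n
    rcases hroots r hrf with h | h
    · have := Complex.abs.le_sub N r
      rw [hNabs] at this
      have hd' : (d:ℝ) < (n:ℝ) - Complex.abs r := by linarith
      linarith
    · have := Complex.abs.le_sub r N
      rw [hNabs] at this
      have h2 : Complex.abs (N - r) = Complex.abs (r - N) := by
        rw [← AbsoluteValue.map_neg Complex.abs]; ring_nf
      linarith
  -- assemble
  have habs : Complex.abs (G.eval N)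
      = Complex.abs G.leadingCoeff * ((G.roots.map fun r => Complex.abs (N - r)).prod) := by
    conv_lhs => rw [hfact]
    rw [eval_mul, eval_C, map_mul, eval_multiset_prod]
    congr 1
    rw [map_multiset_prod Complex.abs, Multiset.map_map, Multiset.map_map]
    apply congrArg
    apply Multiset.map_congr rfl
    intro r _
    simp
  have hlc : (1:ℝ) ≤ Complex.abs G.leadingCoeff := by
    have : G.leadingCoeff = (g.leadingCoeff : ℂ) := leadingCoeff_map_of_leadingCoeff_ne_zero _ (by simpa using leadingCoeff_ne_zero.mpr hg0)
    rw [this, Complex.abs_intCast]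
    exact_mod_cast Int.one_le_abs (leadingCoeff_ne_zero.mpr hg0)
  have hs0 : (G.roots.map fun r => Complex.abs (N - r)) ≠ 0 := by
    intro h
    have := congrArg Multiset.card h
    rw [Multiset.card_map, hcard] at this
    simp at this
    omega
  have hmulti := multi (d:ℝ) (by positivity) (G.roots.map fun r => Complex.abs (N - r))
    (by intro x hx
        obtain ⟨r, hr, rfl⟩ := Multiset.mem_map.mp hx
        exact hfar r hr)
  obtain ⟨_, hstrict⟩ := hmulti
  have hstrict := hstrict hs0
  rw [Multiset.card_map, hcard] at hstrict
  have final : (d:ℝ) ^ g.natDegree < Complex.abs (G.eval N) := by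
    rw [habs]
    calc (d:ℝ) ^ g.natDegree < (G.roots.map fun r => Complex.abs (N - r)).prod := hstrict
      _ = 1 * (G.roots.map fun r => Complex.abs (N - r)).prod := (one_mul _).symm
      _ ≤ Complex.abs G.leadingCoeff * (G.roots.map fun r => Complex.abs (N - r)).prod := by
          apply mul_le_mul_of_nonneg_right hlc
          exact Multiset.prod_nonneg (by
            intro x hx
            obtain ⟨r, _, rfl⟩ := Multiset.mem_map.mp hx
            exact Complex.abs.nonneg _)
  rwa [hevalG, Complex.abs_intCast] at final

-- arithmetic helper
theorem endA (A B d q : ℕ) (hd : 0 < d) (hq0 : 0 < q) (hAB : A * B = d * q)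
    (hqA : q ∣ A) (hB : d < B) : False := by
  obtain ⟨s, rfl⟩ := hqA
  have h1 : q * (s * B) = q * d := by ring_nf; ring_nf at hAB; linarith [hAB]
  have h2 : s * B = d := Nat.eq_of_mul_eq_mul_left hq0 h1
  have h3 : B ∣ d := ⟨s, by rw [← h2]; ring⟩
  exact absurd (Nat.le_of_dvd hd h3) (by omega)

-- nonunit primitive factor has positive degree
theorem posdeg (a : ℤ[X]) (hprim : a.IsPrimitive) (hu : ¬ IsUnit a) : 1 ≤ a.natDegree := by
  by_contra h
  push_neg at h
  have h0 : a.natDegree = 0 := by omega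
  have : a = C (a.coeff 0) := (Polynomial.eq_C_of_natDegree_eq_zero h0)
  have hc : IsUnit (a.coeff 0) := hprim (a.coeff 0) (this ▸ dvd_refl _)
  exact hu (this ▸ isUnit_C.mpr hc)

open Polynomial in
theorem stmt_13 (m : ℕ) (f : ℤ[X]) (hdeg : f.natDegree = m) (hprim : f.IsPrimitive)
    (α β : ℝ) (hα : 0 < α) (hαβ : α < β) (j : ℕ) (hj : j ≤ m)
    (hineq : (|f.coeff j| : ℝ) * α ^ j >
      ∑ i ∈ (Finset.range (m + 1)).erase j, (|f.coeff i| : ℝ) * β ^ i)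
    (n d : ℕ) (hn : 0 < n) (hd : 0 < d)
    (hnα : (n : ℝ) ≥ α + d) (hnβ : (n : ℝ) ≤ β - d)
    (hdvd : (d : ℤ) ∣ f.eval (n : ℤ))
    (hcond : Nat.Prime ((f.eval (n : ℤ)).natAbs / d) ∨
      ∃ p k : ℕ, p.Prime ∧ 1 ≤ k ∧ (f.eval (n : ℤ)).natAbs / d = p ^ k ∧
        Nat.Coprime (p ^ k) ((Polynomial.derivative f).eval (n : ℤ)).natAbs) :
    Irreducible f := by
  have hd1 : (1:ℝ) ≤ (d:ℝ) := by exact_mod_cast hd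
  have hroots : ∀ z : ℂ, aeval z f = 0 → Complex.abs z < α ∨ β < Complex.abs z :=
    lemA m f hdeg α β j hj hineq hα.le (by linarith)
  set F : ℕ := (f.eval (n : ℤ)).natAbs with hF
  set q : ℕ := F / d with hqdef
  have hdF : d ∣ F := by
    have := Int.natAbs_dvd_natAbs.mpr hdvd
    simpa using this
  have hFq : F = d * q := (Nat.mul_div_cancel' hdF).symm
  -- q ≥ 2 in both cases
  have hq2 : 2 ≤ q := by
    rcases hcond with hq | ⟨p, k, hp, hk, hqpk, _⟩
    · exact hq.two_le
    · rw [hqdef] at *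
      rw [hqpk]
      calc 2 ≤ p := hp.two_le
        _ = p ^ 1 := (pow_one p).symm
        _ ≤ p ^ k := Nat.pow_le_pow_right hp.pos hk
  constructor
  · -- not a unit
    intro hu
    obtain ⟨r, hr, hCr⟩ := Polynomial.isUnit_iff.mp hu
    have : f.eval (n : ℤ) = r := by rw [← hCr, eval_C]
    have hr1 : r.natAbs = 1 := Int.isUnit_iff.mp hr |>.elim (fun h => by simp [h]) (fun h => by simp [h])
    have hF1 : F = 1 := by rw [hF, this, hr1]
    have h2dq : 2 ≤ d * q := le_trans hq2 (Nat.le_mul_of_pos_left q hd)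
    omega
  · intro a b hab
    by_contra hcon
    push_neg at hcon
    obtain ⟨hua, hub⟩ := hcon
    have haf : a ∣ f := ⟨b, hab⟩
    have hbf : b ∣ f := ⟨a, by rw [hab]; ring⟩
    have haprim : a.IsPrimitive := fun r hr => hprim r (hr.trans haf)
    have hbprim : b.IsPrimitive := fun r hr => hprim r (hr.trans hbf)
    have hadeg : 1 ≤ a.natDegree := posdeg a haprim hua
    have hbdeg : 1 ≤ b.natDegree := posdeg b hbprim hub
    set A : ℕ := (a.eval (n : ℤ)).natAbs with hA
    set B : ℕ := (b.eval (n : ℤ)).natAbs with hB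
    have hdA : d < A := by
      have h1 := lemB f a haf α β hα hroots hadeg n d hd hnα hnβ
      have h2 : (d:ℝ) ≤ (d:ℝ) ^ a.natDegree := le_self_pow₀ hd1 (by omega)
      have h3 : |((a.eval (n : ℤ) : ℤ) : ℝ)| = (A : ℝ) := by
        rw [hA, Nat.cast_natAbs]
        exact (Int.cast_abs).symm
      rw [h3] at h1
      exact_mod_cast lt_of_le_of_lt h2 h1
    have hdB : d < B := by
      have h1 := lemB f b hbf α β hα hroots hbdeg n d hd hnα hnβ
      have h2 : (d:ℝ) ≤ (d:ℝ) ^ b.natDegree := le_self_pow₀ hd1 (by omega)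
      have h3 : |((b.eval (n : ℤ) : ℤ) : ℝ)| = (B : ℝ) := by
        rw [hB, Nat.cast_natAbs]
        exact (Int.cast_abs).symm
      rw [h3] at h1
      exact_mod_cast lt_of_le_of_lt h2 h1
    have hABF : A * B = d * q := by
      rw [← hFq, hF, hA, hB, ← Int.natAbs_mul, hab, eval_mul]
    rcases hcond with hq | ⟨p, k, hp, hk, hqpk, hcop⟩
    · -- prime case
      have hqF : q ∣ A * B := by rw [hABF]; exact Dvd.intro_left d rfl
      rcases (Nat.Prime.dvd_mul hq).mp hqF with hqA | hqB
      · exact endA A B d q hd hq.pos hABF hqA hdB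
      · exact endA B A d q hd hq.pos (by rw [mul_comm]; exact hABF) hqB hdA
    · -- prime power case
      by_cases hpA : p ∣ A
      · by_cases hpB : p ∣ B
        · -- p divides both: contradict coprimality with derivative
          have hder : (derivative f).eval (n : ℤ)
              = (derivative a).eval (n : ℤ) * b.eval (n : ℤ)
                + a.eval (n : ℤ) * (derivative b).eval (n : ℤ) := by
            rw [hab, derivative_mul, eval_add, eval_mul, eval_mul]
          have hpa : (p:ℤ) ∣ a.eval (n : ℤ) := by
            rw [← Int.natAbs_dvd_natAbs]; simpa using hpA
          have hpb : (p:ℤ) ∣ b.eval (n : ℤ) := by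
            rw [← Int.natAbs_dvd_natAbs]; simpa using hpB
          have hpder : (p:ℤ) ∣ (derivative f).eval (n : ℤ) := by
            rw [hder]
            exact dvd_add (Dvd.dvd.mul_left hpb _) (Dvd.dvd.mul_right hpa _)
          have hpderN : p ∣ ((derivative f).eval (n : ℤ)).natAbs := by
            have := Int.natAbs_dvd_natAbs.mpr hpder
            simpa using this
          have hppk : p ∣ p ^ k := dvd_pow_self p (by omega)
          have := Nat.dvd_gcd hppk hpderN
          rw [hcop] at this
          have h1 := Nat.le_of_dvd one_pos this
          have h2 := hp.two_le
          omega
        · -- p does not divide B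
          have hcB : Nat.Coprime B (p ^ k) :=
            ((Nat.Prime.coprime_iff_not_dvd hp).mpr hpB).symm.pow_right k
          have hBd : B ∣ d := by
            apply hcB.dvd_of_dvd_mul_right
            rw [← hqpk, ← hABF]
            exact Dvd.intro_left A rfl
          exact absurd (Nat.le_of_dvd hd hBd) (by omega)
      · -- p does not divide A
        have hcA : Nat.Coprime A (p ^ k) :=
          ((Nat.Prime.coprime_iff_not_dvd hp).mpr hpA).symm.pow_right k
        have hAd : A ∣ d := by
          apply hcA.dvd_of_dvd_mul_right
          rw [← hqpk, ← hABF]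
          exact Dvd.intro B rfl
        exact absurd (Nat.le_of_dvd hd hAd) (by omega)
end

section
/- Let f = a_0 + a_1 z + ... + a_m z^m ∈ ℤ[z] be primitive, and suppose there exist reals 0 < α < β and an index j ∈ {0,...,m} with |a_j| α^j > (β/α)^{m-j} Σ_{i≠j} |a_i| α^i. If there exist natural numbers n, d with β - d ≥ n ≥ α + d such that |f(n)|/d is prime, or is a prime power coprime to |f'(n)|, then f is irreducible in ℤ[z]. -/
open Polynomial

theorem rootFar (m : ℕ) (f : ℤ[X]) (hdeg : f.natDegree = m)
    (α β : ℝ) (hα : 0 < α) (hαβ : α < β) (j : ℕ) (hj : j ≤ m)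
    (hineq : (|f.coeff j| : ℝ) * α ^ j >
      ((β / α) ^ (m - j)) * ∑ i ∈ (Finset.range (m + 1)).erase j, (|f.coeff i| : ℝ) * α ^ i)
    (z : ℂ) (hz : (f.map (Int.castRingHom ℂ)).IsRoot z)
    (hz1 : α ≤ ‖z‖) (hz2 : ‖z‖ ≤ β) : False := by
  set F := f.map (Int.castRingHom ℂ) with hF
  have hFdeg : F.natDegree = m := by
    rw [hF, f.natDegree_map_eq_of_injective (fun a b => by simp)]
    exact hdeg
  have heval : F.eval z = ∑ i ∈ Finset.range (m+1), F.coeff i * z ^ i := by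
    rw [eval_eq_sum_range' (by omega : F.natDegree < m + 1)]
  have hj' : j ∈ Finset.range (m+1) := Finset.mem_range.2 (by omega)
  have hsplit : F.coeff j * z ^ j = -∑ i ∈ (Finset.range (m+1)).erase j, F.coeff i * z ^ i := by
    have h1 := (Finset.add_sum_erase _ (fun i => F.coeff i * z ^ i) hj')
    rw [hz] at heval
    rw [← h1] at heval
    linear_combination -heval
  have hcoeff : ∀ i, ‖F.coeff i‖ = |((f.coeff i : ℝ))| := by
    intro i
    rw [hF, coeff_map]
    have : (Int.castRingHom ℂ) (f.coeff i) = ((f.coeff i : ℝ) : ℂ) := by simp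
    rw [this, Complex.norm_real, Real.norm_eq_abs]
  have habs : |((f.coeff j : ℝ))| * (‖z‖) ^ j ≤
      ∑ i ∈ (Finset.range (m+1)).erase j, |((f.coeff i : ℝ))| * (‖z‖) ^ i := by
    have h2 := congrArg (‖·‖) hsplit
    rw [norm_mul, norm_pow, norm_neg, hcoeff] at h2
    rw [h2]
    refine le_trans (norm_sum_le _ _) (le_of_eq ?_)
    refine Finset.sum_congr rfl fun i _ => ?_
    rw [norm_mul, norm_pow, hcoeff]
  set t := ‖z‖ with ht
  have htα : α ≤ t := hz1
  have ht0 : 0 < t := lt_of_lt_of_le hα hz1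
  have h1 : (1:ℝ) ≤ t/α := (one_le_div hα).2 htα
  have h2 : t/α ≤ β/α := by gcongr
  have key : ∀ i ∈ (Finset.range (m+1)).erase j,
      |((f.coeff i : ℝ))| * t ^ i ≤ |((f.coeff i : ℝ))| * α ^ i * ((t/α)^j * (β/α)^(m-j)) := by
    intro i hi
    have him : i ≤ m := by
      have := Finset.mem_range.1 (Finset.mem_of_mem_erase hi); omega
    have habs0 : (0:ℝ) ≤ |((f.coeff i : ℝ))| := abs_nonneg _
    have hgoal : t ^ i ≤ α ^ i * ((t/α)^j * (β/α)^(m-j)) := by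
      have hti : t ^ i = α ^ i * (t/α)^i := by rw [← mul_pow]; congr 1; field_simp
      rw [hti]
      refine mul_le_mul_of_nonneg_left ?_ (by positivity)
      rcases le_or_gt i j with h | h
      · calc (t/α)^i ≤ (t/α)^j := pow_le_pow_right₀ h1 h
          _ ≤ (t/α)^j * (β/α)^(m-j) := le_mul_of_one_le_right (by positivity)
              (one_le_pow₀ (le_trans h1 h2))
      · have heq : (t/α)^i = (t/α)^j * (t/α)^(i-j) := by
          rw [← pow_add]; congr 1; omega
        rw [heq]
        refine mul_le_mul_of_nonneg_left ?_ (by positivity)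
        calc (t/α)^(i-j) ≤ (β/α)^(i-j) := by gcongr
          _ ≤ (β/α)^(m-j) := pow_le_pow_right₀ (le_trans h1 h2) (by omega)
    calc |((f.coeff i : ℝ))| * t ^ i ≤ |((f.coeff i : ℝ))| * (α ^ i * ((t/α)^j * (β/α)^(m-j))) :=
          mul_le_mul_of_nonneg_left hgoal habs0
      _ = _ := by ring
  have hsum := Finset.sum_le_sum key
  have hfinal : |((f.coeff j : ℝ))| * t ^ j ≤
      ((β/α)^(m-j) * ∑ i ∈ (Finset.range (m+1)).erase j, |((f.coeff i : ℝ))| * α ^ i) * (t/α)^j := by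
    refine le_trans habs (le_trans hsum (le_of_eq ?_))
    simp only [Finset.sum_mul, Finset.mul_sum]
    exact Finset.sum_congr rfl fun i _ => by ring
  have htj : |((f.coeff j : ℝ))| * t ^ j = |((f.coeff j : ℝ))| * α ^ j * (t/α)^j := by
    rw [mul_assoc, ← mul_pow]; congr 2; field_simp
  rw [htj] at hfinal
  have hpos : (0:ℝ) < (t/α)^j := by positivity
  have hlast := le_of_mul_le_mul_right hfinal hpos
  linarith


theorem multiset_prod_lt (d : ℝ) (hd : 1 ≤ d) (s : Multiset ℝ)
    (hs : s ≠ 0) (h : ∀ x ∈ s, d < x) : d ^ Multiset.card s ≤ s.prod ∧ d < s.prod := by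
  induction s using Multiset.induction with
  | empty => exact absurd rfl hs
  | cons a s ih =>
    have ha : d < a := h a (Multiset.mem_cons_self a s)
    rcases eq_or_ne s 0 with rfl | hs0
    · simp [ha.le, ha]
    · obtain ⟨ih1, ih2⟩ := ih hs0 (fun x hx => h x (Multiset.mem_cons_of_mem hx))
      have hd0 : (0:ℝ) < d := lt_of_lt_of_le one_pos hd
      have hprod : d ^ Multiset.card s ≤ s.prod := ih1
      have hpow : (0:ℝ) < d ^ Multiset.card s := by positivity
      constructor
      · rw [Multiset.card_cons, pow_succ, Multiset.prod_cons]
        calc d ^ Multiset.card s * d ≤ s.prod * a := by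
              apply mul_le_mul hprod ha.le hd0.le (le_trans hpow.le hprod)
          _ = a * s.prod := by ring
      · rw [Multiset.prod_cons]
        calc d ≤ d * d := le_mul_of_one_le_left hd0.le hd
          _ < a * s.prod := mul_lt_mul' ha.le ih2 hd0.le (lt_trans hd0 ha)

theorem factorBig (m : ℕ) (f : ℤ[X]) (hdeg : f.natDegree = m)
    (α β : ℝ) (hα : 0 < α) (hαβ : α < β) (j : ℕ) (hj : j ≤ m)
    (hineq : (|f.coeff j| : ℝ) * α ^ j >
      ((β / α) ^ (m - j)) * ∑ i ∈ (Finset.range (m + 1)).erase j, (|f.coeff i| : ℝ) * α ^ i)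
    (n d : ℕ) (hd : 0 < d) (hnα : (n : ℝ) ≥ α + d) (hnβ : (n : ℝ) ≤ β - d)
    (g : ℤ[X]) (hgf : g ∣ f) (hgdeg : 1 ≤ g.natDegree) :
    (d : ℝ) < ((g.eval (n:ℤ)).natAbs : ℝ) := by
  have hinj : Function.Injective (Int.castRingHom ℂ) := fun a b => by simp
  -- f ≠ 0
  have hsum0 : (0:ℝ) ≤ ∑ i ∈ (Finset.range (m + 1)).erase j, (|f.coeff i| : ℝ) * α ^ i :=
    Finset.sum_nonneg fun i _ => by positivity
  have hcj : (0:ℝ) < (|f.coeff j| : ℝ) * α ^ j := lt_of_le_of_lt (mul_nonneg (pow_nonneg (div_nonneg (by linarith) hα.le) _) hsum0) hineq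
  have hf0 : f ≠ 0 := by
    intro h
    rw [h] at hcj
    simp at hcj
  have hg0 : g ≠ 0 := ne_zero_of_dvd_ne_zero hf0 hgf
  set G := g.map (Int.castRingHom ℂ) with hG
  set F := f.map (Int.castRingHom ℂ) with hF
  have hF0 : F ≠ 0 := (Polynomial.map_ne_zero_iff hinj).2 hf0
  have hsplits : Splits G := IsAlgClosed.splits G
  have hcard : Multiset.card G.roots = G.natDegree := splits_iff_card_roots.1 hsplits
  have hGdeg : G.natDegree = g.natDegree := g.natDegree_map_eq_of_injective hinj
  -- each root is far from n
  have hroot : ∀ z ∈ G.roots, (d:ℝ) < ‖(n:ℂ) - z‖ := by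
    intro z hz
    have hzF : z ∈ F.roots :=
      Multiset.mem_of_le (roots.le_of_dvd hF0 (Polynomial.map_dvd _ hgf)) hz
    have hzr : F.IsRoot z := (mem_roots'.1 hzF).2
    have hfar : ¬ (α ≤ ‖z‖ ∧ ‖z‖ ≤ β) := by
      rintro ⟨h1, h2⟩
      exact rootFar m f hdeg α β hα hαβ j hj hineq z hzr h1 h2
    have habsn : ‖(n:ℂ)‖ = (n:ℝ) := by
      rw [Complex.norm_natCast]
    rcases not_and_or.1 hfar with h | h
    · push_neg at h
      calc (d:ℝ) ≤ n - α := by linarith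
        _ < ‖(n:ℂ)‖ - ‖z‖ := by rw [habsn]; linarith
        _ ≤ ‖(n:ℂ) - z‖ := norm_sub_norm_le _ _
    · push_neg at h
      calc (d:ℝ) ≤ β - n := by linarith
        _ < ‖z‖ - ‖(n:ℂ)‖ := by rw [habsn]; linarith
        _ ≤ ‖z - (n:ℂ)‖ := norm_sub_norm_le _ _
        _ = ‖(n:ℂ) - z‖ := norm_sub_rev _ _
  -- eval via roots
  have hGeq := hsplits.eq_prod_roots
  have heval : ‖G.eval (n:ℂ)‖ =
      ‖G.leadingCoeff‖ * ((G.roots.map fun z => ‖(n:ℂ) - z‖).prod) := by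
    have hmp : ∀ s : Multiset ℂ, ‖s.prod‖ = (s.map (‖·‖)).prod := fun s => map_multiset_prod normHom s
    conv_lhs => rw [hGeq]
    rw [eval_mul, eval_C, norm_mul, eval_multiset_prod, hmp,
      Multiset.map_map, Multiset.map_map]
    congr 1
    refine congrArg _ (Multiset.map_congr rfl ?_)
    intro z _
    simp [Function.comp]
  -- leading coeff ≥ 1
  have hlead : (1:ℝ) ≤ ‖G.leadingCoeff‖ := by
    rw [hG, leadingCoeff_map_of_injective hinj]
    have : g.leadingCoeff ≠ 0 := leadingCoeff_ne_zero.2 hg0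
    have h1 : (1:ℤ) ≤ |g.leadingCoeff| := Int.one_le_abs this
    calc (1:ℝ) ≤ |(g.leadingCoeff : ℝ)| := by exact_mod_cast h1
      _ = ‖(Int.castRingHom ℂ) g.leadingCoeff‖ := by
          rw [show ((Int.castRingHom ℂ) g.leadingCoeff) = ((g.leadingCoeff:ℝ):ℂ) by simp,
            Complex.norm_real, Real.norm_eq_abs]
  -- product bound
  have hs0 : G.roots ≠ 0 := by
    intro h
    rw [h] at hcard
    simp [hGdeg] at hcard
    omega
  have hd1 : (1:ℝ) ≤ (d:ℝ) := by exact_mod_cast hd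
  obtain ⟨-, hprod⟩ := multiset_prod_lt (d:ℝ) hd1 (G.roots.map fun z => ‖(n:ℂ) - z‖)
    (by simpa using hs0) (by
      intro x hx
      obtain ⟨z, hz, rfl⟩ := Multiset.mem_map.1 hx
      exact hroot z hz)
  -- tie to integer value
  have hevalInt : G.eval (n:ℂ) = ((g.eval (n:ℤ) : ℤ) : ℂ) := by
    rw [hG, eval_map]
    exact (eval₂_at_natCast (Int.castRingHom ℂ) n).trans (by simp)
  have habsInt : ‖G.eval (n:ℂ)‖ = ((g.eval (n:ℤ)).natAbs : ℝ) := by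
    rw [hevalInt, Complex.norm_intCast]
    rw [Nat.cast_natAbs (α := ℝ)]
    push_cast
    ring
  calc (d:ℝ) < (G.roots.map fun z => ‖(n:ℂ) - z‖).prod := hprod
    _ ≤ ‖G.leadingCoeff‖ * _ := le_mul_of_one_le_left (by
        refine Multiset.prod_nonneg ?_
        intro x hx
        obtain ⟨z, hz, rfl⟩ := Multiset.mem_map.1 hx
        positivity) hlead
    _ = ‖G.eval (n:ℂ)‖ := heval.symm
    _ = _ := habsInt


open Polynomial in
theorem stmt_14 (m : ℕ) (f : ℤ[X]) (hdeg : f.natDegree = m) (hprim : f.IsPrimitive)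
    (α β : ℝ) (hα : 0 < α) (hαβ : α < β) (j : ℕ) (hj : j ≤ m)
    (hineq : (|f.coeff j| : ℝ) * α ^ j >
      ((β / α) ^ (m - j)) * ∑ i ∈ (Finset.range (m + 1)).erase j, (|f.coeff i| : ℝ) * α ^ i)
    (n d : ℕ) (hn : 0 < n) (hd : 0 < d)
    (hnα : (n : ℝ) ≥ α + d) (hnβ : (n : ℝ) ≤ β - d)
    (hdvd : (d : ℤ) ∣ f.eval (n : ℤ))
    (hcond : Nat.Prime ((f.eval (n : ℤ)).natAbs / d) ∨
      ∃ p k : ℕ, p.Prime ∧ 1 ≤ k ∧ (f.eval (n : ℤ)).natAbs / d = p ^ k ∧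
        Nat.Coprime (p ^ k) ((Polynomial.derivative f).eval (n : ℤ)).natAbs) :
    Irreducible f := by
  set N := (f.eval (n : ℤ)).natAbs / d with hN
  have hN2 : 2 ≤ N := by
    rcases hcond with h | ⟨p, k, hp, hk, he, -⟩
    · exact h.two_le
    · have heN : N = p ^ k := he
      calc 2 ≤ p := hp.two_le
        _ ≤ p ^ k := Nat.le_self_pow (by omega) p
        _ = N := heN.symm
  have hdvd' : d ∣ (f.eval (n : ℤ)).natAbs := by
    have := Int.natAbs_dvd_natAbs.mpr hdvd
    simpa using this
  have hfabs : (f.eval (n : ℤ)).natAbs = d * N := (Nat.mul_div_cancel' hdvd').symm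
  have hf0 : f ≠ 0 := by
    intro h
    rw [h] at hfabs
    simp at hfabs
    omega
  constructor
  · intro hu
    obtain ⟨r, hr, hrf⟩ := Polynomial.isUnit_iff.1 hu
    have h1 : (f.eval (n:ℤ)).natAbs = 1 := by
      rw [← hrf]
      rcases Int.isUnit_iff.1 hr with rfl | rfl <;> simp
    rw [hfabs] at h1
    have : N ≤ 1 := Nat.le_of_dvd one_pos ⟨d, h1.symm.trans (Nat.mul_comm d N)⟩
    omega
  · intro a b hab
    by_contra hcon
    push_neg at hcon
    obtain ⟨ha, hb⟩ := hcon
    have hadeg : 1 ≤ a.natDegree := by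
      by_contra h
      push_neg at h
      have hc := Polynomial.eq_C_of_natDegree_eq_zero (by omega : a.natDegree = 0)
      refine ha ?_
      rw [hc] at hab ⊢
      exact Polynomial.isUnit_C.2 (hprim (a.coeff 0) ⟨b, hab⟩)
    have hbdeg : 1 ≤ b.natDegree := by
      by_contra h
      push_neg at h
      have hc := Polynomial.eq_C_of_natDegree_eq_zero (by omega : b.natDegree = 0)
      refine hb ?_
      rw [hc] at hab ⊢
      exact Polynomial.isUnit_C.2 (hprim (b.coeff 0) ⟨a, by rw [hab]; ring⟩)
    have hGa : d < (a.eval (n:ℤ)).natAbs := by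
      have := factorBig m f hdeg α β hα hαβ j hj hineq n d hd hnα hnβ a ⟨b, hab⟩ hadeg
      exact_mod_cast this
    have hHb : d < (b.eval (n:ℤ)).natAbs := by
      have := factorBig m f hdeg α β hα hαβ j hj hineq n d hd hnα hnβ b ⟨a, by rw [hab]; ring⟩ hbdeg
      exact_mod_cast this
    set A := (a.eval (n:ℤ)).natAbs with hA
    set B := (b.eval (n:ℤ)).natAbs with hB
    have hAB : A * B = d * N := by
      rw [hA, hB, ← Int.natAbs_mul, ← eval_mul, ← hab, hfabs]
    rcases hcond with hP | ⟨p, k, hp, hk, he, hcop⟩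
    · have hPN : Nat.Prime N := hP
      have key : ∀ X Y : ℕ, d < Y → X * Y = d * N → N ∣ X → False := by
        intro X Y hY hXY hNX
        obtain ⟨c, rfl⟩ := hNX
        have hN0 : 0 < N := by omega
        have hcY : c * Y = d := by
          apply Nat.eq_of_mul_eq_mul_left hN0
          calc N * (c * Y) = N * c * Y := by ring
            _ = d * N := hXY
            _ = N * d := by ring
        have : Y ≤ d := Nat.le_of_dvd hd ⟨c, hcY.symm.trans (Nat.mul_comm c Y)⟩
        omega
      have hdvdAB : N ∣ A * B := by
        rw [hAB]
        exact dvd_mul_left N d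
      rcases hPN.dvd_mul.1 hdvdAB with h | h
      · exact key A B hHb hAB h
      · exact key B A hGa (by rw [← hAB]; ring) h
    · have heN : N = p ^ k := he
      have hpdvd : ∀ X Y : ℕ, d < X → X * Y = d * N → p ∣ X := by
        intro X Y hX hXY
        by_contra hnd
        have hc : Nat.Coprime (p ^ k) X :=
          Nat.Coprime.pow_left k ((Nat.Prime.coprime_iff_not_dvd hp).2 hnd)
        have hXdvd : X ∣ d * N := ⟨Y, hXY.symm⟩
        rw [heN] at hXdvd
        have hXd : X ∣ d := Nat.Coprime.dvd_of_dvd_mul_right hc.symm hXdvd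
        have := Nat.le_of_dvd hd hXd
        omega
      have hpA := hpdvd A B hGa hAB
      have hpB := hpdvd B A hHb (by rw [← hAB]; ring)
      have hpa : (p : ℤ) ∣ a.eval (n:ℤ) :=
        (Int.natCast_dvd_natCast.2 hpA).trans (Int.natAbs_dvd.2 dvd_rfl)
      have hpb : (p : ℤ) ∣ b.eval (n:ℤ) :=
        (Int.natCast_dvd_natCast.2 hpB).trans (Int.natAbs_dvd.2 dvd_rfl)
      have hder : (p : ℤ) ∣ (Polynomial.derivative f).eval (n:ℤ) := by
        rw [hab, derivative_mul, eval_add, eval_mul, eval_mul]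
        exact dvd_add (hpb.mul_left _) (hpa.mul_right _)
      have hderN : p ∣ ((Polynomial.derivative f).eval (n:ℤ)).natAbs := by
        have := Int.natAbs_dvd_natAbs.mpr hder
        simpa using this
      have hp1 : p ∣ p ^ k := dvd_pow_self p (by omega)
      have hone : p ∣ 1 := by
        have := Nat.dvd_gcd hp1 hderN
        rwa [hcop] at this
      have := Nat.le_of_dvd one_pos hone
      have := hp.two_le
      omega
end

section
/- For integers k ≥ m + 2 ≥ 4, a prime p, and 1 ≤ d ≤ p(p-1) with p ∤ d, the polynomial F_3 = -p^2 + z ± p^{k-m} d z^m is irreducible in ℤ[z]. -/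
open Polynomial

lemma coeffF (p m : ℕ) (hm : 2 ≤ m) (a : ℤ) :
    (-C ((p : ℤ) ^ 2) + X + C a * X ^ m).coeff 0 = -(p:ℤ)^2 ∧
    (-C ((p : ℤ) ^ 2) + X + C a * X ^ m).coeff 1 = 1 ∧
    (-C ((p : ℤ) ^ 2) + X + C a * X ^ m).coeff m = a ∧
    (∀ l, 2 ≤ l → l ≠ m → (-C ((p : ℤ) ^ 2) + X + C a * X ^ m).coeff l = 0) := by
  refine ⟨?_, ?_, ?_, fun l hl hlm => ?_⟩ <;>
    simp only [coeff_add, coeff_neg, coeff_C_mul, coeff_X_pow, coeff_X, coeff_C]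
  · have h0 : ¬ ((0:ℕ) = m) := by omega
    simp [h0]
  · have h0 : ¬ ((1:ℕ) = m) := by omega
    simp [h0]
  · have h0 : ¬ (m = 0) := by omega
    have h1 : ¬ (1 = m) := by omega
    simp [h0, h1]
  · have h0 : ¬ (l = 0) := by omega
    have h1 : ¬ (1 = l) := by omega
    simp [h0, h1, hlm]

lemma degF (p m : ℕ) (hm : 2 ≤ m) (a : ℤ) (ha : a ≠ 0) :
    (-C ((p : ℤ) ^ 2) + X + C a * X ^ m).natDegree = m := by
  apply le_antisymm
  · apply le_trans (Polynomial.natDegree_add_le _ _)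
    simp only [max_le_iff]
    constructor
    · apply le_trans (Polynomial.natDegree_add_le _ _)
      simp only [max_le_iff, natDegree_neg, natDegree_C, natDegree_X]
      omega
    · apply le_trans (Polynomial.natDegree_C_mul_le _ _)
      simp [Polynomial.natDegree_X_pow]
  · apply Polynomial.le_natDegree_of_ne_zero
    rw [(coeffF p m hm a).2.2.1]
    exact ha

lemma ms_bound (B : ℝ) (hB : 0 ≤ B) (s : Multiset ℝ) (h : ∀ x ∈ s, B ≤ x) :
    B ^ (Multiset.card s) ≤ s.prod := by
  induction s using Multiset.induction_on with
  | empty => simp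
  | cons a t ih =>
    have hBa : B ≤ a := h a (Multiset.mem_cons_self a t)
    have ht : ∀ x ∈ t, B ≤ x := fun x hx => h x (Multiset.mem_cons_of_mem hx)
    have h1 : B ^ Multiset.card t ≤ t.prod := ih ht
    simp only [Multiset.card_cons, Multiset.prod_cons, pow_succ']
    exact mul_le_mul hBa h1 (pow_nonneg hB _) (le_trans hB hBa)

lemma root_bound (p m e d : ℕ) (hp : 2 ≤ p) (hm : 2 ≤ m) (he : 2 ≤ e) (hd : 1 ≤ d)
    (a : ℤ) (habs : |a| = (p:ℤ)^e * d) (z : ℂ)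
    (hz : eval z ((-C ((p : ℤ) ^ 2) + X + C a * X ^ m).map (Int.castRingHom ℂ)) = 0) :
    (p:ℝ)^2 - 1 ≤ (p:ℝ)^e * d * ‖z‖^m := by
  have hQ : ((p:ℝ)^2 : ℝ) ≤ (p:ℝ)^e * d := by
    have h1 : (p:ℝ)^2 ≤ (p:ℝ)^e := by
      apply pow_le_pow_right₀ (by exact_mod_cast le_trans (by norm_num) hp) he
    have h2 : (1:ℝ) ≤ (d:ℝ) := by exact_mod_cast hd
    nlinarith [pow_nonneg (show (0:ℝ) ≤ p by positivity) e]
  have habsC : ‖((a : ℂ))‖ = (p:ℝ)^e * d := by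
    rw [Complex.norm_intCast]
    rw [show |(a:ℝ)| = ((|a| : ℤ) : ℝ) by push_cast; simp]
    rw [habs]; push_cast; ring
  have heval : -((p:ℂ)^2) + z + (a:ℂ) * z^m = 0 := by
    simpa [Polynomial.eval_map, Polynomial.eval₂_add, Polynomial.eval₂] using hz
  have hkey : (p:ℝ)^2 ≤ ‖z‖ + (p:ℝ)^e * d * ‖z‖^m := by
    have : (p:ℂ)^2 = z + (a:ℂ) * z^m := by linear_combination -heval
    calc (p:ℝ)^2 = ‖((p:ℂ)^2)‖ := by
              rw [norm_pow]; simp [Complex.norm_natCast]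
      _ = ‖(z + (a:ℂ)*z^m)‖ := by rw [this]
      _ ≤ ‖z‖ + ‖((a:ℂ)*z^m)‖ := norm_add_le _ _
      _ = ‖z‖ + (p:ℝ)^e * d * ‖z‖^m := by
              rw [norm_mul, norm_pow, habsC]
  rcases le_or_gt 1 ‖z‖ with h1 | h1
  · have : (p:ℝ)^e * d * 1 ≤ (p:ℝ)^e * d * ‖z‖^m := by
      apply mul_le_mul_of_nonneg_left _ (by positivity)
      exact one_le_pow₀ h1
    nlinarith
  · nlinarith [norm_nonneg z]

lemma dumas (p : ℕ) (hp : p.Prime) (m e : ℕ) (hm : 2 ≤ m) (he : 1 ≤ e) (a : ℤ)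
    (hpa : (p:ℤ)^e ∣ a) (hpa2 : ¬ (p:ℤ)^(e+1) ∣ a)
    (G H : ℤ[X]) (hGH : G * H = -C ((p:ℤ)^2) + X + C a * X^m)
    (hG0 : ¬ (p:ℤ) ∣ G.coeff 0) (hH1 : ¬ (p:ℤ) ∣ H.coeff 1) :
    (e:ℤ) * G.natDegree ≤ ((m:ℤ) - 1) * (padicValInt p G.leadingCoeff : ℤ) := by
  haveI : Fact p.Prime := ⟨hp⟩
  have ha : a ≠ 0 := by rintro rfl; exact hpa2 (dvd_zero _)
  obtain ⟨hF0, hF1, hFm, hFmid⟩ := coeffF p m hm a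
  set F : ℤ[X] := -C ((p:ℤ)^2) + X + C a * X^m with hFdef
  have hGne : G ≠ 0 := by rintro rfl; exact hG0 (by simp)
  have hHne : H ≠ 0 := by rintro rfl; exact hH1 (by simp)
  set g := G.natDegree with hgdef
  set h := H.natDegree with hhdef
  have hgh : g + h = m := by
    rw [hgdef, hhdef, ← Polynomial.natDegree_mul hGne hHne, hGH, degF p m hm a ha]
  -- the weight functions
  set wG : ℕ → ℤ := fun i => ((m:ℤ) - 1) * (padicValInt p (G.coeff i) : ℤ) - i * e with hwG
  set wH : ℕ → ℤ := fun j => ((m:ℤ) - 1) * (padicValInt p (H.coeff j) : ℤ) - j * e with hwH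
  set SG : Finset ℕ := (Finset.range (g+1)).filter (fun i => G.coeff i ≠ 0) with hSG
  set SH : Finset ℕ := (Finset.range (h+1)).filter (fun j => H.coeff j ≠ 0) with hSH
  have hG0ne : G.coeff 0 ≠ 0 := fun hh => hG0 (hh ▸ dvd_zero _)
  have hH1ne : H.coeff 1 ≠ 0 := fun hh => hH1 (hh ▸ dvd_zero _)
  have hmemSG : ∀ i, G.coeff i ≠ 0 → i ∈ SG := by
    intro i hi
    rw [hSG, Finset.mem_filter, Finset.mem_range]
    exact ⟨Nat.lt_succ_of_le (le_natDegree_of_ne_zero hi), hi⟩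
  have hmemSH : ∀ j, H.coeff j ≠ 0 → j ∈ SH := by
    intro j hj
    rw [hSH, Finset.mem_filter, Finset.mem_range]
    exact ⟨Nat.lt_succ_of_le (le_natDegree_of_ne_zero hj), hj⟩
  have hSGne : SG.Nonempty := ⟨0, hmemSG 0 hG0ne⟩
  have hSHne : SH.Nonempty := ⟨1, hmemSH 1 hH1ne⟩
  set μG : ℤ := SG.inf' hSGne wG with hμG
  set μH : ℤ := SH.inf' hSHne wH with hμH
  -- minimal minimizers
  set TG : Finset ℕ := SG.filter (fun i => wG i = μG) with hTG
  set TH : Finset ℕ := SH.filter (fun j => wH j = μH) with hTH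
  have hTGne : TG.Nonempty := by
    obtain ⟨i, hi, hieq⟩ := Finset.exists_mem_eq_inf' hSGne wG
    exact ⟨i, by rw [hTG, Finset.mem_filter]; exact ⟨hi, hieq.symm⟩⟩
  have hTHne : TH.Nonempty := by
    obtain ⟨j, hj, hjeq⟩ := Finset.exists_mem_eq_inf' hSHne wH
    exact ⟨j, by rw [hTH, Finset.mem_filter]; exact ⟨hj, hjeq.symm⟩⟩
  set i₀ := TG.min' hTGne with hi₀def
  set j₀ := TH.min' hTHne with hj₀def
  have hi₀T : i₀ ∈ TG := TG.min'_mem hTGne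
  have hj₀T : j₀ ∈ TH := TH.min'_mem hTHne
  have hi₀S : i₀ ∈ SG := (Finset.mem_filter.mp hi₀T).1
  have hj₀S : j₀ ∈ SH := (Finset.mem_filter.mp hj₀T).1
  have hi₀w : wG i₀ = μG := (Finset.mem_filter.mp hi₀T).2
  have hj₀w : wH j₀ = μH := (Finset.mem_filter.mp hj₀T).2
  have hi₀ne : G.coeff i₀ ≠ 0 := (Finset.mem_filter.mp hi₀S).2
  have hj₀ne : H.coeff j₀ ≠ 0 := (Finset.mem_filter.mp hj₀S).2
  have hGlow : ∀ i ∈ SG, μG ≤ wG i := fun i hi => Finset.inf'_le wG hi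
  have hHlow : ∀ j ∈ SH, μH ≤ wH j := fun j hj => Finset.inf'_le wH hj
  have hGstrict : ∀ i ∈ SG, i < i₀ → μG < wG i := by
    intro i hi hlt
    rcases lt_or_eq_of_le (hGlow i hi) with hcase | hcase
    · exact hcase
    · exact absurd (TG.min'_le i (Finset.mem_filter.mpr ⟨hi, hcase.symm⟩)) (not_le.mpr hlt)
  have hHstrict : ∀ j ∈ SH, j < j₀ → μH < wH j := by
    intro j hj hlt
    rcases lt_or_eq_of_le (hHlow j hj) with hcase | hcase
    · exact hcase
    · exact absurd (TH.min'_le j (Finset.mem_filter.mpr ⟨hj, hcase.symm⟩)) (not_le.mpr hlt)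
  have hm' : (2:ℤ) ≤ (m:ℤ) := by exact_mod_cast hm
  have he' : (1:ℤ) ≤ (e:ℤ) := by exact_mod_cast he
  have hμG0 : μG ≤ 0 := by
    have h1 := hGlow 0 (hmemSG 0 hG0ne)
    have hv0 : padicValInt p (G.coeff 0) = 0 := padicValInt.eq_zero_of_not_dvd hG0
    have h0 : wG 0 = 0 := by rw [hwG]; simp [hv0]
    linarith
  have hμHe : μH ≤ -(e:ℤ) := by
    have h1 := hHlow 1 (hmemSH 1 hH1ne)
    have hv1 : padicValInt p (H.coeff 1) = 0 := padicValInt.eq_zero_of_not_dvd hH1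
    have h0 : wH 1 = -(e:ℤ) := by rw [hwH]; simp [hv1]
    linarith
  have hj₀pos : 1 ≤ j₀ := by
    by_contra hcon
    push_neg at hcon
    have hj00 : j₀ = 0 := Nat.lt_one_iff.mp hcon
    have h0 : (0:ℤ) ≤ wH j₀ := by
      rw [hj00, hwH]
      simp only [Nat.cast_zero, zero_mul, sub_zero, CharP.cast_eq_zero]
      exact mul_nonneg (by linarith) (Nat.cast_nonneg _)
    rw [hj₀w] at h0
    linarith
  -- the key index and valuation
  set l := i₀ + j₀ with hldef
  set ν : ℕ := padicValInt p (G.coeff i₀) + padicValInt p (H.coeff j₀) with hν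
  have hmainne : G.coeff i₀ * H.coeff j₀ ≠ 0 := mul_ne_zero hi₀ne hj₀ne
  have hvmain : padicValInt p (G.coeff i₀ * H.coeff j₀) = ν := padicValInt.mul hi₀ne hj₀ne
  have hmain_dvd : (p:ℤ)^ν ∣ G.coeff i₀ * H.coeff j₀ := by
    rw [← hvmain]; exact padicValInt_dvd _
  have hmain_ndvd : ¬ (p:ℤ)^(ν+1) ∣ G.coeff i₀ * H.coeff j₀ := by
    intro hdvd
    rcases (padicValInt_dvd_iff _ _).mp hdvd with h0 | hle
    · exact hmainne h0
    · rw [hvmain] at hle; omega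
  have hw0 : μG + μH = ((m:ℤ)-1) * (ν:ℤ) - (l:ℤ) * e := by
    rw [← hi₀w, ← hj₀w, hwG, hwH, hν, hldef]; push_cast; ring
  have hother : ∀ x : ℕ × ℕ, x.1 + x.2 = l → x ≠ (i₀, j₀) →
      (p:ℤ)^(ν+1) ∣ G.coeff x.1 * H.coeff x.2 := by
    rintro ⟨i, j⟩ hsum hne
    by_cases hzero : G.coeff i * H.coeff j = 0
    · rw [hzero]; exact dvd_zero _
    have hGine : G.coeff i ≠ 0 := left_ne_zero_of_mul hzero
    have hHjne : H.coeff j ≠ 0 := right_ne_zero_of_mul hzero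
    have hiS : i ∈ SG := hmemSG i hGine
    have hjS : j ∈ SH := hmemSH j hHjne
    simp only at hsum
    have hine : i ≠ i₀ := by
      rintro rfl
      exact hne (by rw [Prod.mk.injEq]; omega)
    have hstrict : μG + μH < wG i + wH j := by
      rcases lt_or_gt_of_ne hine with hlt | hgt
      · have h1 := hGstrict i hiS hlt
        have h2 := hHlow j hjS
        linarith
      · have hjlt : j < j₀ := by omega
        have h1 := hHstrict j hjS hjlt
        have h2 := hGlow i hiS
        linarith
    have hw : wG i + wH j =
        ((m:ℤ)-1) * ((padicValInt p (G.coeff i) : ℤ) + (padicValInt p (H.coeff j):ℤ))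
          - (l:ℤ) * e := by
      rw [hwG, hwH, ← hsum]; push_cast; ring
    have hνlt : (ν:ℤ) < (padicValInt p (G.coeff i) : ℤ) + (padicValInt p (H.coeff j):ℤ) := by
      by_contra hcon
      push_neg at hcon
      have hmul := mul_le_mul_of_nonneg_left hcon (show (0:ℤ) ≤ (m:ℤ)-1 by linarith)
      rw [hw, hw0] at hstrict
      linarith
    have hle : ν + 1 ≤ padicValInt p (G.coeff i * H.coeff j) := by
      rw [padicValInt.mul hGine hHjne]; exact_mod_cast hνlt
    exact dvd_trans (pow_dvd_pow _ hle) (padicValInt_dvd _)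
  have hcoefl : F.coeff l = ∑ x ∈ Finset.HasAntidiagonal.antidiagonal l, G.coeff x.1 * H.coeff x.2 := by
    rw [← hGH, coeff_mul]
  have hmemanti : ((i₀, j₀) : ℕ×ℕ) ∈ Finset.HasAntidiagonal.antidiagonal l := Finset.HasAntidiagonal.mem_antidiagonal.mpr rfl
  have hsplit : G.coeff i₀ * H.coeff j₀
      + ∑ x ∈ (Finset.HasAntidiagonal.antidiagonal l).erase (i₀,j₀), G.coeff x.1 * H.coeff x.2 = F.coeff l := by
    rw [hcoefl]
    exact Finset.add_sum_erase (Finset.HasAntidiagonal.antidiagonal l) (fun x => G.coeff x.1 * H.coeff x.2) hmemanti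
  have hrest : (p:ℤ)^(ν+1) ∣
      ∑ x ∈ (Finset.HasAntidiagonal.antidiagonal l).erase (i₀,j₀), G.coeff x.1 * H.coeff x.2 := by
    apply Finset.dvd_sum
    intro x hx
    obtain ⟨hxne, hxmem⟩ := Finset.mem_erase.mp hx
    exact hother x (Finset.HasAntidiagonal.mem_antidiagonal.mp hxmem) hxne
  have hFlν : (p:ℤ)^ν ∣ F.coeff l := by
    rw [← hsplit]
    exact dvd_add hmain_dvd (dvd_trans (pow_dvd_pow _ (Nat.le_succ ν)) hrest)
  have hFlν1 : ¬ (p:ℤ)^(ν+1) ∣ F.coeff l := by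
    intro hdvd
    apply hmain_ndvd
    have heq : G.coeff i₀ * H.coeff j₀ = F.coeff l
        - ∑ x ∈ (Finset.HasAntidiagonal.antidiagonal l).erase (i₀,j₀), G.coeff x.1 * H.coeff x.2 :=
      eq_sub_of_add_eq hsplit
    rw [heq]
    exact dvd_sub hdvd hrest
  have hFlne : F.coeff l ≠ 0 := by
    intro h0
    rw [h0] at hFlν1
    exact hFlν1 (dvd_zero _)
  have hi₀g : i₀ ≤ g := by
    have := (Finset.mem_filter.mp hi₀S).1
    rw [Finset.mem_range] at this
    omega
  have hj₀h : j₀ ≤ h := by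
    have := (Finset.mem_filter.mp hj₀S).1
    rw [Finset.mem_range] at this
    omega
  have hlm : l ≤ m := by omega
  -- determine the value of μG + μH
  have hkey : μG + μH = -(e:ℤ) := by
    rcases eq_or_ne l m with hlm' | hlne
    · -- ν = e in this case
      have hane : a ≠ 0 := ha
      have hva1 : e ≤ padicValInt p a := by
        rcases (padicValInt_dvd_iff e a).mp hpa with h0 | hle
        · exact absurd h0 hane
        · exact hle
      have hva2 : padicValInt p a ≤ e := by
        by_contra hcon
        push_neg at hcon
        exact hpa2 ((padicValInt_dvd_iff (e+1) a).mpr (Or.inr hcon))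
      have hν1 : ν ≤ padicValInt p a := by
        rw [← hFm, ← hlm']
        rcases (padicValInt_dvd_iff ν (F.coeff l)).mp hFlν with h0 | hle
        · exact absurd h0 hFlne
        · exact hle
      have hν2 : padicValInt p a ≤ ν := by
        by_contra hcon
        push_neg at hcon
        apply hFlν1
        apply (padicValInt_dvd_iff (ν+1) (F.coeff l)).mpr
        right
        rw [hlm', hFm]
        omega
      have hνe : ν = e := by omega
      rw [hw0, hνe, hlm']
      push_cast
      ring
    · have hl1 : l = 1 := by
        by_contra hll
        exact hFlne (hFmid l (by omega) hlne)
      have hν0 : ν = 0 := by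
        have := hFlν
        rw [hl1, hF1] at this
        rcases (padicValInt_dvd_iff ν 1).mp this with h0 | hle
        · norm_num at h0
        · simpa [padicValInt.one] using hle
      rw [hw0, hν0, hl1]
      push_cast
      ring
  have hμGpos : 0 ≤ μG := by linarith
  -- conclude at the leading coefficient
  have hgS : g ∈ SG := hmemSG g (by
    rw [hgdef]
    exact Polynomial.leadingCoeff_ne_zero.mpr hGne)
  have hfin : μG ≤ ((m:ℤ)-1) * (padicValInt p G.leadingCoeff : ℤ) - (g:ℤ) * e :=
    hGlow g hgS
  linarith

set_option maxHeartbeats 1000000 in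
lemma keyFalse (p m e d : ℕ) (hp : p.Prime) (hm : 2 ≤ m) (he : 2 ≤ e)
    (hd : 1 ≤ d) (hdp : d ≤ p * (p-1)) (a : ℤ)
    (hpa : (p:ℤ)^e ∣ a) (hpa2 : ¬(p:ℤ)^(e+1) ∣ a) (habs : |a| = (p:ℤ)^e * d)
    (G H : ℤ[X]) (hGH : G * H = -C ((p:ℤ)^2) + X + C a * X^m)
    (hg : 1 ≤ G.natDegree)
    (hG0 : ¬ (p:ℤ) ∣ G.coeff 0) (hH1 : ¬ (p:ℤ) ∣ H.coeff 1) : False := by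
  haveI : Fact p.Prime := ⟨hp⟩
  have hp2 : 2 ≤ p := hp.two_le
  have ha : a ≠ 0 := fun h => hpa2 (h ▸ dvd_zero _)
  have hGne : G ≠ 0 := fun h => hG0 (by simp [h])
  set g := G.natDegree with hgdef
  have hdumas := dumas p hp m e hm (by omega) a hpa hpa2 G H hGH hG0 hH1
  set v := padicValInt p G.leadingCoeff with hvdef
  have hleadne : G.leadingCoeff ≠ 0 := Polynomial.leadingCoeff_ne_zero.mpr hGne
  -- constant coefficient of G is ±1
  have hc0 : G.coeff 0 * H.coeff 0 = -(p:ℤ)^2 := by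
    have h1 : (G*H).coeff 0 = -(p:ℤ)^2 := by rw [hGH]; exact (coeffF p m hm a).1
    rwa [Polynomial.mul_coeff_zero] at h1
  have hA0unit : IsUnit (G.coeff 0) := by
    have hdvd : G.coeff 0 ∣ (p:ℤ)^2 := ⟨-H.coeff 0, by linarith⟩
    have hcop : IsCoprime (G.coeff 0) ((p:ℤ)) :=
      ((Nat.prime_iff_prime_int.mp hp).coprime_iff_not_dvd.mpr hG0).symm
    exact (hcop.pow_right).isUnit_of_dvd' dvd_rfl hdvd
  have hA0 : |G.coeff 0| = 1 := by
    rcases Int.isUnit_iff.mp hA0unit with h | h <;> simp [h]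
  -- pass to ℂ
  set G1 : ℂ[X] := G.map (Int.castRingHom ℂ) with hG1def
  have hinj : Function.Injective (Int.castRingHom ℂ) := Int.cast_injective
  have hG1ne : G1 ≠ 0 := by
    rw [hG1def, Ne, Polynomial.map_eq_zero_iff hinj]
    exact hGne
  have hG1deg : G1.natDegree = g := by
    rw [hG1def, Polynomial.natDegree_map_eq_of_injective hinj]
  have hG1lead : G1.leadingCoeff = ((G.leadingCoeff : ℂ)) := by
    rw [Polynomial.leadingCoeff, hG1deg, hG1def, Polynomial.coeff_map]
    rfl
  have hsplits : Splits G1 := IsAlgClosed.splits G1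
  have hcard : Multiset.card G1.roots = g := by
    have := hsplits.natDegree_eq_card_roots
    omega
  set L : ℝ := ‖G1.leadingCoeff‖ with hLdef
  set P : ℝ := (G1.roots.map (fun r : ℂ => ‖r‖)).prod with hPdef
  -- |G₀| = L * P
  have hfact := hsplits.eq_prod_roots
  have hevalfact := congrArg (fun q => ‖(Polynomial.eval 0 q)‖) hfact
  simp only [Polynomial.eval_mul, Polynomial.eval_C, Polynomial.eval_multiset_prod,
    Multiset.map_map, Function.comp, Polynomial.eval_sub, Polynomial.eval_X,
    Polynomial.eval_C, zero_sub, norm_mul] at hevalfact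
  have hLP : L * P = 1 := by
    have habs0 : ‖(Polynomial.eval 0 G1)‖ = 1 := by
      have h00 : Polynomial.eval 0 G1 = ((G.coeff 0 : ℂ)) := by
        rw [← Polynomial.coeff_zero_eq_eval_zero, hG1def, Polynomial.coeff_map]
        rfl
      rw [h00, Complex.norm_intCast]
      rw [show |((G.coeff 0 : ℤ) : ℝ)| = ((|G.coeff 0| : ℤ) : ℝ) by push_cast; ring]
      rw [hA0]; norm_num
    rw [habs0] at hevalfact
    have hnp : ‖(Multiset.map (fun x : ℂ => -x) G1.roots).prod‖
        = (Multiset.map (fun x : ℂ => ‖x‖) (Multiset.map (fun x : ℂ => -x) G1.roots)).prod :=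
      map_multiset_prod (normHom : ℂ →*₀ ℝ) _
    rw [hLdef, hPdef, hevalfact, hnp, Multiset.map_map]
    congr 2
    apply Multiset.map_congr rfl
    intro r _
    simp
  -- lower bound for the roots
  have hd0 : (0:ℝ) < d := by exact_mod_cast hd
  have hp0 : (0:ℝ) < p := by positivity
  have hp1 : (1:ℝ) < p := by exact_mod_cast hp2
  set Q : ℝ := (p:ℝ)^e * d with hQdef
  set B : ℝ := (p:ℝ)^2 - 1 with hBdef
  have hBpos : 0 < B := by
    rw [hBdef]
    have h2 : (2:ℝ) ≤ p := by exact_mod_cast hp2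
    nlinarith
  have hQpos : 0 < Q := by rw [hQdef]; positivity
  have hroots : ∀ x ∈ G1.roots.map (fun r => Q * ‖r‖^m), B ≤ x := by
    intro x hx
    obtain ⟨r, hr, rfl⟩ := Multiset.mem_map.mp hx
    have hrr : Polynomial.eval r G1 = 0 := (Polynomial.mem_roots hG1ne).mp hr
    have hFr : eval r ((-C ((p:ℤ)^2) + X + C a * X^m).map (Int.castRingHom ℂ)) = 0 := by
      rw [← hGH, Polynomial.map_mul, Polynomial.eval_mul, ← hG1def, hrr, zero_mul]
    exact root_bound p m e d hp2 hm he hd a habs r hFr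
  have hms := ms_bound B hBpos.le _ hroots
  rw [Multiset.card_map, hcard] at hms
  have hprodsplit : (G1.roots.map (fun r => Q * ‖r‖^m)).prod = Q^g * P^m := by
    rw [show (fun r : ℂ => Q * ‖r‖^m)
        = (fun r : ℂ => ((fun _ : ℂ => Q) r) * ((fun t : ℂ => ‖t‖^m) r)) from rfl,
      Multiset.prod_map_mul]
    congr 1
    · rw [Multiset.map_const', Multiset.prod_replicate, hcard]
    · rw [hPdef, Multiset.prod_map_pow]
  rw [hprodsplit] at hms
  have hLnonneg : (0:ℝ) ≤ L := by rw [hLdef]; exact norm_nonneg _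
  have hLlow : (p:ℝ)^(e*g) ≤ L^(m-1) := by
    have hvlow : (p:ℤ)^v ≤ |G.leadingCoeff| :=
      Int.le_of_dvd (abs_pos.mpr hleadne) ((dvd_abs _ _).mpr (padicValInt_dvd _))
    have hL : L = ((|G.leadingCoeff| : ℤ) : ℝ) := by
      rw [hLdef, hG1lead, Complex.norm_intCast]
      push_cast
      ring
    have hnat : e*g ≤ (m-1)*v := by
      have h1 : ((e:ℤ)) * g ≤ ((m:ℤ) - 1) * v := hdumas
      have h2 : ((m:ℤ) - 1) = ((m - 1 : ℕ) : ℤ) := by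
        have : (1:ℕ) ≤ m := by omega
        push_cast [this]
        ring
      rw [h2] at h1
      exact_mod_cast h1
    have hvL : ((p:ℝ))^v ≤ L := by
      rw [hL]
      exact_mod_cast hvlow
    calc (p:ℝ)^(e*g) ≤ (p:ℝ)^((m-1)*v) := pow_le_pow_right₀ hp1.le hnat
      _ = ((p:ℝ)^v)^(m-1) := by rw [← pow_mul, Nat.mul_comm]
      _ ≤ L^(m-1) := pow_le_pow_left₀ (by positivity) hvL _
  have hBL : B^g * L^m ≤ Q^g := by
    calc B^g * L^m ≤ (Q^g * P^m) * L^m :=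
          mul_le_mul_of_nonneg_right hms (pow_nonneg hLnonneg m)
      _ = Q^g * (L*P)^m := by ring
      _ = Q^g := by rw [hLP]; ring
  have hpow : (B^g * L^m)^(m-1) ≤ (Q^g)^(m-1) :=
    pow_le_pow_left₀ (by positivity) hBL _
  set t := g * (m-1) with htdef
  have hexp : e*g*m = e*t + e*g := by
    rw [htdef]
    obtain ⟨n, rfl⟩ : ∃ n, m = n + 1 := ⟨m - 1, by omega⟩
    simp only [Nat.succ_sub_one]
    ring
  have hLest : (p:ℝ)^(e*g*m) ≤ (L^m)^(m-1) := by
    rw [show (L^m)^(m-1) = (L^(m-1))^m by rw [← pow_mul, ← pow_mul, Nat.mul_comm],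
      show e*g*m = (e*g)*m from rfl, pow_mul]
    exact pow_le_pow_left₀ (by positivity) hLlow m
  have hQexp : (Q^g)^(m-1) = (p:ℝ)^(e*t) * (d:ℝ)^t := by
    rw [hQdef, htdef, show e*(g*(m-1)) = e*g*(m-1) from by ring]
    ring
  have hfinal : B^t * ((p:ℝ)^(e*t) * (p:ℝ)^(e*g)) ≤ (p:ℝ)^(e*t) * (d:ℝ)^t := by
    calc B^t * ((p:ℝ)^(e*t) * (p:ℝ)^(e*g))
        = B^t * (p:ℝ)^(e*g*m) := by rw [hexp, pow_add]
      _ ≤ B^t * (L^m)^(m-1) := by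
          exact mul_le_mul_of_nonneg_left hLest (by positivity)
      _ = (B^g * L^m)^(m-1) := by rw [mul_pow, htdef, pow_mul]
      _ ≤ (Q^g)^(m-1) := hpow
      _ = (p:ℝ)^(e*t) * (d:ℝ)^t := hQexp
  have hdB : (d:ℝ) ≤ B := by
    rw [hBdef]
    have h1 : (d:ℝ) ≤ (p:ℝ) * ((p:ℝ) - 1) := by
      have : ((p * (p-1) : ℕ) : ℝ) = (p:ℝ) * ((p:ℝ) - 1) := by
        have h2 : (1:ℕ) ≤ p := by omega
        push_cast [h2]
        ring
      rw [← this]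
      exact_mod_cast hdp
    nlinarith
  have hdBt : (d:ℝ)^t ≤ B^t := pow_le_pow_left₀ hd0.le hdB t
  have hcancel : B^t * (p:ℝ)^(e*g) ≤ B^t := by
    have h1 : (p:ℝ)^(e*t) * (B^t * (p:ℝ)^(e*g)) ≤ (p:ℝ)^(e*t) * B^t := by
      calc (p:ℝ)^(e*t) * (B^t * (p:ℝ)^(e*g)) = B^t * ((p:ℝ)^(e*t) * (p:ℝ)^(e*g)) := by ring
        _ ≤ (p:ℝ)^(e*t) * (d:ℝ)^t := hfinal
        _ ≤ (p:ℝ)^(e*t) * B^t := by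
            exact mul_le_mul_of_nonneg_left hdBt (by positivity)
    exact le_of_mul_le_mul_left h1 (by positivity)
  have hple : (p:ℝ)^(e*g) ≤ 1 := by
    have := hcancel
    nlinarith [pow_pos hBpos t]
  have hgt : (1:ℝ) < (p:ℝ)^(e*g) := by
    apply one_lt_pow₀ hp1
    have h1 : 1 ≤ e * g := Nat.one_le_iff_ne_zero.mpr (by positivity)
    omega
  linarith

set_option maxHeartbeats 1000000 in
open Polynomial in
theorem stmt_16 (k m : ℕ) (hm : 2 ≤ m) (hk : m + 2 ≤ k)
    (p : ℕ) (hp : p.Prime) (d : ℕ) (hd : 1 ≤ d) (hdp : d ≤ p * (p - 1))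
    (hpd : ¬ p ∣ d) (ε : ℤ) (hε : ε = 1 ∨ ε = -1) :
    Irreducible
      (-C ((p : ℤ) ^ 2) + X + C (ε * (p : ℤ) ^ (k - m) * d) * X ^ m) := by
  haveI : Fact p.Prime := ⟨hp⟩
  have hp2 : 2 ≤ p := hp.two_le
  set e := k - m with hedef
  have he : 2 ≤ e := by omega
  set a : ℤ := ε * (p:ℤ)^e * d with hadef
  have hdInt : ¬ (p:ℤ) ∣ (d:ℤ) := by rwa [Int.natCast_dvd_natCast]
  have hppow_ne : ((p:ℤ))^e ≠ 0 := by positivity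
  have hpa : (p:ℤ)^e ∣ a := ⟨ε * d, by rw [hadef]; ring⟩
  have hpa2 : ¬ (p:ℤ)^(e+1) ∣ a := by
    intro hdvd
    obtain ⟨c, hc⟩ := hdvd
    have h1 : (p:ℤ)^e * (ε * d) = (p:ℤ)^e * ((p:ℤ) * c) := by
      rw [show (p:ℤ)^e * (ε * (d:ℤ)) = a from by rw [hadef]; ring, hc]
      ring
    have h2 : (ε : ℤ) * d = (p:ℤ) * c := mul_left_cancel₀ hppow_ne h1
    have h3 : (p:ℤ) ∣ ε * d := ⟨c, h2⟩
    rcases hε with rfl | rfl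
    · simp only [one_mul] at h3
      exact hdInt h3
    · apply hdInt
      have := dvd_neg.mpr h3
      simpa using this
  have habs : |a| = (p:ℤ)^e * d := by
    rcases hε with rfl | rfl <;>
      · rw [hadef, abs_mul, abs_mul]
        simp [abs_of_nonneg, pow_nonneg]
  have ha : a ≠ 0 := fun h => hpa2 (h ▸ dvd_zero _)
  constructor
  · intro hunit
    have h0 := Polynomial.natDegree_eq_zero_of_isUnit hunit
    rw [degF p m hm a ha] at h0
    omega
  · intro A B hAB
    by_contra hcon
    push_neg at hcon
    obtain ⟨hA, hB⟩ := hcon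
    have hdegs : ∀ U V : ℤ[X],
        (-C ((p:ℤ)^2) + X + C a * X^m) = U * V → ¬ IsUnit U → 1 ≤ U.natDegree := by
      intro U V hUV hUnotunit
      rcases Nat.eq_zero_or_pos U.natDegree with h0 | h1
      · exfalso
        obtain ⟨c, rfl⟩ := Polynomial.natDegree_eq_zero.mp h0
        have hcdvd : C c ∣ (-C ((p:ℤ)^2) + X + C a * X^m) := ⟨V, hUV⟩
        have hc1 : c ∣ (-C ((p:ℤ)^2) + X + C a * X^m).coeff 1 :=
          (Polynomial.C_dvd_iff_dvd_coeff c _).mp hcdvd 1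
        rw [(coeffF p m hm a).2.1] at hc1
        exact hUnotunit (Polynomial.isUnit_C.mpr (isUnit_of_dvd_one hc1))
      · exact h1
    have hdegA : 1 ≤ A.natDegree := hdegs A B hAB hA
    have hdegB : 1 ≤ B.natDegree := hdegs B A (by rw [hAB, mul_comm]) hB
    -- reduction mod p
    set φ := Int.castRingHom (ZMod p) with hφdef
    have hmapF : (-C ((p:ℤ)^2) + X + C a * X^m).map φ = X := by
      have hφp : φ ((p:ℤ)^2) = 0 := by
        rw [map_pow]
        have : φ ((p:ℤ)) = 0 := by
          simp [hφdef, ZMod.intCast_zmod_eq_zero_iff_dvd]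
        rw [this]
        ring
      have hφa : φ a = 0 := by
        rw [hφdef]
        simp only [eq_intCast]
        rw [ZMod.intCast_zmod_eq_zero_iff_dvd]
        exact dvd_trans (dvd_pow_self (p:ℤ) (by omega)) hpa
      rw [Polynomial.map_add, Polynomial.map_add, Polynomial.map_neg, Polynomial.map_C,
        Polynomial.map_mul, Polynomial.map_C, Polynomial.map_X, Polynomial.map_pow,
        Polynomial.map_X, hφp, hφa]
      simp
    have hXeq : X = A.map φ * B.map φ := by
      rw [← Polynomial.map_mul, ← hAB, hmapF]
    have hunits := (Polynomial.irreducible_X (R := ZMod p)).isUnit_or_isUnit hXeq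
    have hmain : ∀ U V : ℤ[X], (-C ((p:ℤ)^2) + X + C a * X^m) = U * V →
        1 ≤ U.natDegree → IsUnit (U.map φ) → False := by
      intro U V hUV hdegU hu
      obtain ⟨c, hcunit, hceq⟩ := Polynomial.isUnit_iff.mp hu
      have hU0 : ¬ (p:ℤ) ∣ U.coeff 0 := by
        intro hdvd
        have h1 : (U.map φ).coeff 0 = 0 := by
          rw [Polynomial.coeff_map, hφdef]
          simp only [eq_intCast]
          rwa [ZMod.intCast_zmod_eq_zero_iff_dvd]
        rw [← hceq, Polynomial.coeff_C] at h1
        simp at h1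
        exact hcunit.ne_zero h1
      have hV1 : ¬ (p:ℤ) ∣ V.coeff 1 := by
        intro hdvd
        have hprod : C c * V.map φ = X := by
          rw [hceq, ← Polynomial.map_mul, ← hUV, hmapF]
        have h1 := congrArg (fun q => Polynomial.coeff q 1) hprod
        simp only [Polynomial.coeff_C_mul, Polynomial.coeff_X_one] at h1
        have h2 : ((V.coeff 1 : ℤ) : ZMod p) = 0 := by
          rwa [ZMod.intCast_zmod_eq_zero_iff_dvd]
        rw [Polynomial.coeff_map, hφdef] at h1
        simp only [eq_intCast] at h1
        rw [h2, mul_zero] at h1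
        exact one_ne_zero h1.symm
      exact keyFalse p m e d hp hm he hd hdp a hpa hpa2 habs U V hUV.symm hdegU hU0 hV1
    rcases hunits with hu | hu
    · exact hmain A B hAB hdegA hu
    · exact hmain B A (by rw [hAB, mul_comm]) hdegB hu
end

section
/- For integers k ≥ m ≥ 2, a prime p, and a positive integer d with p ≥ 1 + d, the polynomial F_4 = (z - p) + (z - p)^2 + ... + (z - p)^{m-1} ± (p^{2k-2} d) z^m is irreducible in ℤ[z]. -/
open Polynomial Finset


private lemma mnorm_prod (s : Multiset ℂ) : ‖s.prod‖ = (s.map (fun z => ‖z‖)).prod := by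
  induction s using Multiset.induction_on with
  | empty => simp
  | cons a t ih => simp [norm_mul, ih]

private lemma mprod_le_one (s : Multiset ℝ) (h0 : ∀ x ∈ s, 0 ≤ x) (h1 : ∀ x ∈ s, x ≤ 1) :
    s.prod ≤ 1 := by
  induction s using Multiset.induction_on with
  | empty => simp
  | cons a t ih =>
    rw [Multiset.prod_cons]
    have ht0 : (0:ℝ) ≤ t.prod :=
      Multiset.prod_nonneg (fun x hx => h0 x (Multiset.mem_cons_of_mem hx))
    have ht1 := ih (fun x hx => h0 x (Multiset.mem_cons_of_mem hx))
      (fun x hx => h1 x (Multiset.mem_cons_of_mem hx))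
    have ha0 := h0 a (Multiset.mem_cons_self a t)
    have ha1 := h1 a (Multiset.mem_cons_self a t)
    nlinarith

private lemma mprod_lt_one (s : Multiset ℝ) (hs : s ≠ 0) (h0 : ∀ x ∈ s, 0 ≤ x)
    (h1 : ∀ x ∈ s, x < 1) : s.prod < 1 := by
  obtain ⟨a, ha⟩ := Multiset.exists_mem_of_ne_zero hs
  obtain ⟨t, rfl⟩ : ∃ t, s = a ::ₘ t := ⟨s.erase a, (Multiset.cons_erase ha).symm⟩
  rw [Multiset.prod_cons]
  have ht0 : (0:ℝ) ≤ t.prod :=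
    Multiset.prod_nonneg (fun x hx => h0 x (Multiset.mem_cons_of_mem hx))
  have ht1 := mprod_le_one t (fun x hx => h0 x (Multiset.mem_cons_of_mem hx))
    (fun x hx => (h1 x (Multiset.mem_cons_of_mem hx)).le)
  have ha0 := h0 a (Multiset.mem_cons_self a t)
  have ha1 := h1 a (Multiset.mem_cons_self a t)
  nlinarith

private lemma one_le_mprod (s : Multiset ℝ) (h : ∀ x ∈ s, 1 ≤ x) : 1 ≤ s.prod := by
  induction s using Multiset.induction_on with
  | empty => simp
  | cons a t ih =>
    rw [Multiset.prod_cons]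
    have ht := ih (fun x hx => h x (Multiset.mem_cons_of_mem hx))
    have ha := h a (Multiset.mem_cons_self a t)
    nlinarith

private lemma lt_mprod (b : ℝ) (hb : 1 ≤ b) (s : Multiset ℝ) (hs : s ≠ 0)
    (h : ∀ x ∈ s, b < x) : b < s.prod := by
  obtain ⟨a, ha⟩ := Multiset.exists_mem_of_ne_zero hs
  obtain ⟨t, rfl⟩ : ∃ t, s = a ::ₘ t := ⟨s.erase a, (Multiset.cons_erase ha).symm⟩
  rw [Multiset.prod_cons]
  have ht := one_le_mprod t (fun x hx => hb.trans (h x (Multiset.mem_cons_of_mem hx)).le)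
  have ha' := h a (Multiset.mem_cons_self a t)
  nlinarith


private lemma coeff_sum_pow {R : Type*} [CommRing R] [Nontrivial R] (a : R) (n : ℕ) (hn : 1 ≤ n) :
    (∑ j ∈ Icc 1 n, (X - C a) ^ j).coeff n = 1 := by
  rw [finset_sum_coeff, Finset.sum_eq_single n]
  · have hd : ((X - C a) ^ n).natDegree = n := by
      rw [(monic_X_sub_C a).natDegree_pow, natDegree_X_sub_C, mul_one]
    have h := ((monic_X_sub_C a).pow n).coeff_natDegree
    rwa [hd] at h
  · intro j hj hjn
    apply coeff_eq_zero_of_natDegree_lt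
    have hle : j ≤ n := (Finset.mem_Icc.mp hj).2
    have hdj : ((X - C a) ^ j).natDegree = j := by
      rw [(monic_X_sub_C a).natDegree_pow, natDegree_X_sub_C, mul_one]
    omega
  · intro h; exact absurd (Finset.mem_Icc.mpr ⟨hn, le_refl n⟩) h

private lemma natDegree_sum_pow {R : Type*} [CommRing R] [Nontrivial R] (a : R) (n : ℕ) :
    (∑ j ∈ Icc 1 n, (X - C a) ^ j).natDegree ≤ n := by
  apply natDegree_sum_le_of_forall_le
  intro j hj
  have hdj : ((X - C a) ^ j).natDegree = j := by
    rw [(monic_X_sub_C a).natDegree_pow, natDegree_X_sub_C, mul_one]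
  have := (Finset.mem_Icc.mp hj).2
  omega

private lemma geom_key (p : ℕ) (hp : 2 ≤ p) :
    ∀ n, 1 ≤ n → (1 + p) ^ (n + 1) + p ^ (2 * n) ≤ p ^ (2 * (n + 1)) := by
  intro n hn
  induction n with
  | zero => omega
  | succ n ih =>
    rcases Nat.eq_or_lt_of_le hn with h1 | h1
    · have : n = 0 := by omega
      subst this
      have h1 : 2 * p ≤ p ^ 2 := by nlinarith
      have h2 : 4 * p ^ 2 ≤ p ^ 4 := by nlinarith
      have hq : 1 ≤ p ^ 2 := Nat.one_le_pow _ _ (by omega)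
      ring_nf
      nlinarith [h1, h2, hq]
    · have hn1 : 1 ≤ n := by omega
      have K := ih hn1
      set q := p ^ (2 * n) with hq'
      have K2 : (1 + p) ^ (n + 2) + (1 + p) * q ≤ (1 + p) * (q * p ^ 2) := by
        calc (1 + p) ^ (n + 2) + (1 + p) * q
            = (1 + p) * ((1 + p) ^ (n + 1) + q) := by ring
          _ ≤ (1 + p) * p ^ (2 * (n + 1)) := Nat.mul_le_mul_left _ K
          _ = (1 + p) * (q * p ^ 2) := by rw [hq', ← pow_add]; ring_nf
      have h3 : 2 * p ^ 2 ≤ p ^ 3 := by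
        calc 2 * p ^ 2 ≤ p * p ^ 2 := Nat.mul_le_mul_right _ hp
          _ = p ^ 3 := by ring
      have h4 : 2 * p ^ 3 ≤ p ^ 4 := by
        calc 2 * p ^ 3 ≤ p * p ^ 3 := Nat.mul_le_mul_right _ hp
          _ = p ^ 4 := by ring
      have hlin : (1 + p) * p ^ 2 + p ^ 2 ≤ p ^ 4 + (1 + p) := by nlinarith [h3, h4]
      have hmul : q * ((1 + p) * p ^ 2 + p ^ 2) ≤ q * (p ^ 4 + (1 + p)) :=
        Nat.mul_le_mul_left q hlin
      have e2 : p ^ (2 * (n + 1)) = q * p ^ 2 := by rw [hq', ← pow_add]; ring_nf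
      have e3 : p ^ (2 * (n + 1 + 1)) = q * p ^ 4 := by rw [hq', ← pow_add]; ring_nf
      rw [e2, e3]
      nlinarith [K2, hmul]

private lemma geom_bound (p : ℕ) (hp : 2 ≤ p) :
    ∀ n, 1 ≤ n → (∑ j ∈ Icc 1 n, (1 + p) ^ j) < p ^ (2 * n) := by
  intro n hn
  induction n with
  | zero => omega
  | succ n ih =>
    rcases Nat.eq_or_lt_of_le hn with h1 | h1
    · have : n = 0 := by omega
      subst this
      simp
      nlinarith
    · have hn1 : 1 ≤ n := by omega
      have ih' := ih hn1
      rw [Finset.sum_Icc_succ_top (by omega : 1 ≤ n + 1)]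
      have := geom_key p hp n hn1
      omega

private lemma alt_sum_ne_zero (p : ℕ) (hp2 : 2 ≤ p) :
    ∀ n, 1 ≤ n → (∑ j ∈ Icc 1 n, (-(p:ℤ))^j) ≠ 0 := by
  have hex : ∀ n, 1 ≤ n → ∃ t : ℤ, (∑ j ∈ Icc 1 n, (-(p:ℤ))^j) = -(p:ℤ) + (p:ℤ)^2 * t := by
    intro n hn
    induction n with
    | zero => omega
    | succ n ih =>
      rcases Nat.eq_or_lt_of_le hn with h1 | h1
      · have hn0 : n = 0 := by omega
        subst hn0
        exact ⟨0, by simp⟩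
      · have hn1 : 1 ≤ n := by omega
        obtain ⟨t, ht⟩ := ih hn1
        refine ⟨t + (-(p:ℤ))^(n-1), ?_⟩
        rw [Finset.sum_Icc_succ_top (by omega : 1 ≤ n+1), ht]
        have hpw : (-(p:ℤ))^(n+1) = (p:ℤ)^2 * (-(p:ℤ))^(n-1) := by
          obtain ⟨n', rfl⟩ : ∃ n', n = n' + 1 := ⟨n - 1, by omega⟩
          have : n' + 1 + 1 = n' + 2 := by omega
          rw [this, show n' + 1 - 1 = n' by omega, pow_add]
          ring
        rw [hpw]
        ring
  intro n hn hzero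
  obtain ⟨t, ht⟩ := hex n hn
  rw [hzero] at ht
  have hp0 : (p:ℤ) ≠ 0 := by positivity
  have h1 : (1:ℤ) = (p:ℤ) * t := by
    have h2 : (p:ℤ) * 1 = (p:ℤ) * ((p:ℤ) * t) := by linear_combination ht
    have := mul_left_cancel₀ hp0 h2
    linarith [this]
  have hdvd : (p:ℤ) ∣ 1 := ⟨t, h1⟩
  have := Int.le_of_dvd one_pos hdvd
  have : (2:ℤ) ≤ (p:ℤ) := by exact_mod_cast hp2
  omega

private lemma factor_bounds (p : ℕ) (hp2 : 2 ≤ p) (q : Polynomial ℤ) (hq : 1 ≤ q.natDegree)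
    (hroots : ∀ z : ℂ, (aeval z) q = 0 → ‖z‖ < 1) :
    (q.eval 0).natAbs < q.leadingCoeff.natAbs ∧ p ≤ (q.eval (p : ℤ)).natAbs := by
  have hq0 : q ≠ 0 := fun h => by simp [h] at hq
  set f : ℤ →+* ℂ := Int.castRingHom ℂ with hf
  have hinj : Function.Injective (f : ℤ → ℂ) := fun a b hab => by
    simpa using hab
  set Q : Polynomial ℂ := q.map f with hQdef
  have hQdeg : Q.natDegree = q.natDegree := natDegree_map_eq_of_injective hinj q
  have hQ0 : Q ≠ 0 := by
    intro h
    rw [hQdef] at h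
    exact hq0 ((Polynomial.map_eq_zero_iff hinj).mp h)
  have hsplit : Splits Q := IsAlgClosed.splits Q
  have hfact := hsplit.eq_prod_roots
  have hcard : Q.roots.card = q.natDegree := by
    rw [splits_iff_card_roots.mp hsplit]; exact hQdeg
  have hrne : Q.roots ≠ 0 := by
    intro h
    rw [h] at hcard
    simp at hcard
    omega
  have hrootlt : ∀ z ∈ Q.roots, ‖z‖ < 1 := by
    intro z hz
    apply hroots
    have hzr : Q.eval z = 0 := (mem_roots hQ0).mp hz
    rw [hQdef, eval_map] at hzr
    rwa [aeval_def]
  have hlcQ : Q.leadingCoeff = f q.leadingCoeff := by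
    rw [leadingCoeff, hQdeg, hQdef, coeff_map]; rfl
  have hlcnorm : ‖Q.leadingCoeff‖ = (q.leadingCoeff.natAbs : ℝ) := by
    rw [hlcQ]
    simp only [hf, eq_intCast, Complex.norm_intCast]
    rw [Nat.cast_natAbs, Int.cast_abs]
  have hlc1 : (1 : ℝ) ≤ ‖Q.leadingCoeff‖ := by
    rw [hlcnorm]
    have : q.leadingCoeff ≠ 0 := leadingCoeff_ne_zero.mpr hq0
    have : 1 ≤ q.leadingCoeff.natAbs := Int.natAbs_pos.mpr this
    exact_mod_cast this
  have heval : ∀ x : ℂ, ‖Q.eval x‖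
      = ‖Q.leadingCoeff‖ * ((Q.roots.map (fun z => ‖x - z‖)).prod) := by
    intro x
    conv_lhs => rw [hfact]
    rw [eval_mul, eval_C, eval_multiset_prod, Multiset.map_map, norm_mul, mnorm_prod,
      Multiset.map_map]
    congr 1
    refine congrArg Multiset.prod (Multiset.map_congr rfl ?_)
    intro z hz
    simp
  have hev0 : ∀ (a : ℤ), Q.eval ((a : ℤ) : ℂ) = f (q.eval a) := by
    intro a
    rw [hQdef]
    exact_mod_cast eval_intCast_map f q a
  constructor
  · -- at 0
    have h0 := heval 0
    have hprod : ((Q.roots.map (fun z => ‖(0:ℂ) - z‖)).prod) < 1 := by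
      apply mprod_lt_one
      · simpa using hrne
      · intro x hx
        obtain ⟨z, hz, rfl⟩ := Multiset.mem_map.mp hx
        positivity
      · intro x hx
        obtain ⟨z, hz, rfl⟩ := Multiset.mem_map.mp hx
        simpa using hrootlt z hz
    have : ‖Q.eval 0‖ < ‖Q.leadingCoeff‖ := by
      rw [h0]
      nlinarith [hlc1, hprod, Multiset.prod_nonneg (s := Q.roots.map (fun z => ‖(0:ℂ) - z‖))
        (by intro a ha; obtain ⟨z, hz, rfl⟩ := Multiset.mem_map.mp ha; positivity)]
    have h00 : ((0:ℤ) : ℂ) = (0 : ℂ) := by norm_num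
    rw [← h00, hev0 0, hlcnorm] at this
    have : ((q.eval 0).natAbs : ℝ) < (q.leadingCoeff.natAbs : ℝ) := by
      rwa [hf, show ‖(Int.castRingHom ℂ) (q.eval 0)‖ = ((q.eval 0).natAbs : ℝ) by
        simp only [eq_intCast, Complex.norm_intCast]
        rw [Nat.cast_natAbs, Int.cast_abs]] at this
    exact_mod_cast this
  · -- at p
    have hpev := heval ((p : ℤ) : ℂ)
    have hprod : ((p:ℝ) - 1) < ((Q.roots.map (fun z => ‖((p:ℤ):ℂ) - z‖)).prod) := by
      apply lt_mprod
      · have : (2:ℝ) ≤ p := by exact_mod_cast hp2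
        linarith
      · simpa using hrne
      · intro x hx
        obtain ⟨z, hz, rfl⟩ := Multiset.mem_map.mp hx
        have h1 : ‖((p:ℤ):ℂ)‖ - ‖z‖ ≤ ‖((p:ℤ):ℂ) - z‖ := norm_sub_norm_le _ _
        have h2 : ‖((p:ℤ):ℂ)‖ = (p:ℝ) := by
          push_cast
          simp
        have := hrootlt z hz
        linarith
    have hge : ((p:ℝ) - 1) < ‖Q.eval ((p:ℤ):ℂ)‖ := by
      rw [hpev]
      have hpr : (2:ℝ) ≤ (p:ℝ) := by exact_mod_cast hp2
      have hprodpos : (0:ℝ) ≤ ((Q.roots.map (fun z => ‖((p:ℤ):ℂ) - z‖)).prod) := by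
        linarith [hprod]
      calc (p:ℝ) - 1 < ((Q.roots.map (fun z => ‖((p:ℤ):ℂ) - z‖)).prod) := hprod
        _ = 1 * ((Q.roots.map (fun z => ‖((p:ℤ):ℂ) - z‖)).prod) := (one_mul _).symm
        _ ≤ ‖Q.leadingCoeff‖ * ((Q.roots.map (fun z => ‖((p:ℤ):ℂ) - z‖)).prod) :=
            mul_le_mul_of_nonneg_right hlc1 hprodpos
    rw [hev0 p] at hge
    have hcast : ‖f (q.eval (p:ℤ))‖ = (((q.eval (p:ℤ)).natAbs : ℕ) : ℝ) := by
      simp only [hf, eq_intCast, Complex.norm_intCast]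
      rw [Nat.cast_natAbs, Int.cast_abs]
    rw [hcast] at hge
    have : ((p - 1 : ℕ) : ℝ) < (((q.eval (p:ℤ)).natAbs : ℕ) : ℝ) := by
      have : ((p - 1 : ℕ) : ℝ) = (p : ℝ) - 1 := by
        have : 1 ≤ p := by omega
        push_cast [Nat.cast_sub this]
        ring
      linarith [hge, this.ge]
    have := Nat.cast_lt.mp this
    omega

private lemma key (p d : ℕ) (hp : p.Prime) (hd1 : 1 ≤ d) (hdp : 1 + d ≤ p) (ε : ℤ)
    (hε : ε = 1 ∨ ε = -1) (N M : ℕ) (F g h : Polynomial ℤ)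
    (hF : F = g * h) (hg1 : 1 ≤ g.natDegree) (hh0 : h ≠ 0)
    (hFlc : F.leadingCoeff = ε * (p:ℤ)^N * d)
    (h00 : F.eval 0 ≠ 0)
    (hFp : F.eval (p:ℤ) = ε * (p:ℤ)^M * d)
    (hroots : ∀ z : ℂ, (aeval z) F = 0 → ‖z‖ < 1)
    (hglc : ¬ (p:ℤ) ∣ g.leadingCoeff) : False := by
  have hp2 : 2 ≤ p := hp.two_le
  have hεd : (ε * d).natAbs = d := by rcases hε with rfl | rfl <;> simp
  have hpZ : Prime (p:ℤ) := Nat.prime_iff_prime_int.mp hp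
  have hg0 : g ≠ 0 := fun hh => by simp [hh] at hg1
  have hsmall : ∀ (x : ℤ) (n : ℕ), ¬ (p:ℤ) ∣ x → x ∣ ε * (p:ℤ)^n * d → x.natAbs ≤ d := by
    intro x n hx hdvd
    have h1 : x ∣ (ε * d) * (p:ℤ)^n := by
      rwa [show ε * (p:ℤ)^n * (d:ℤ) = (ε * d) * (p:ℤ)^n by ring] at hdvd
    have hco : IsCoprime x ((p:ℤ)^n) := (((hpZ.coprime_iff_not_dvd).mpr hx).symm).pow_right
    have h2 : x ∣ ε * d := hco.dvd_of_dvd_mul_right h1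
    have h3 := Int.natAbs_dvd_natAbs.mpr h2
    rw [hεd] at h3
    exact Nat.le_of_dvd hd1 h3
  have hlc_eq : g.leadingCoeff * h.leadingCoeff = ε * (p:ℤ)^N * d := by
    rw [← leadingCoeff_mul, ← hF, hFlc]
  have hglcd : g.leadingCoeff.natAbs ≤ d :=
    hsmall _ N hglc ⟨h.leadingCoeff, hlc_eq.symm⟩
  have hgroots : ∀ z : ℂ, (aeval z) g = 0 → ‖z‖ < 1 := by
    intro z hz
    apply hroots
    rw [hF, map_mul, hz, zero_mul]
  obtain ⟨hb0, hbp⟩ := factor_bounds p hp2 g hg1 hgroots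
  by_cases hcase : (p:ℤ) ∣ g.eval 0
  · have hg00 : g.eval 0 ≠ 0 := by
      intro hz
      exact h00 (by rw [hF, eval_mul, hz, zero_mul])
    have hdv : p ∣ (g.eval 0).natAbs := Int.natCast_dvd.mp hcase
    have hple : p ≤ (g.eval 0).natAbs := Nat.le_of_dvd (Int.natAbs_pos.mpr hg00) hdv
    omega
  · have hgp : ¬ (p:ℤ) ∣ g.eval (p:ℤ) := by
      intro hdvd
      have hsub : ((p:ℤ) - 0) ∣ g.eval (p:ℤ) - g.eval 0 := sub_dvd_eval_sub _ _ g
      rw [sub_zero] at hsub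
      have : (p:ℤ) ∣ g.eval 0 := by
        have h2 := dvd_sub hdvd hsub
        simpa using h2
      exact hcase this
    have hdvdp : g.eval (p:ℤ) ∣ ε * (p:ℤ)^M * d := by
      refine ⟨h.eval (p:ℤ), ?_⟩
      rw [← hFp, hF, eval_mul]
    have := hsmall _ M hgp hdvdp
    omega

open Polynomial in
theorem stmt_17 (k m : ℕ) (hm : 2 ≤ m) (hk : m ≤ k)
    (p : ℕ) (hp : p.Prime) (d : ℕ) (hd : 1 ≤ d) (hdp : 1 + d ≤ p)
    (ε : ℤ) (hε : ε = 1 ∨ ε = -1) :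
    Irreducible
      ((∑ j ∈ Finset.Icc 1 (m - 1), (X - C (p : ℤ)) ^ j)
        + C (ε * (p : ℤ) ^ (2 * k - 2) * d) * X ^ m) := by
  haveI : Fact p.Prime := ⟨hp⟩
  have hp2 : 2 ≤ p := hp.two_le
  have hm1 : 1 ≤ m - 1 := by omega
  set c : ℤ := ε * (p:ℤ)^(2*k-2) * d with hc
  set Sm : Polynomial ℤ := ∑ j ∈ Icc 1 (m-1), (X - C (p:ℤ))^j with hSm
  set F : Polynomial ℤ := Sm + C c * X^m with hFdef
  have hc0 : c ≠ 0 := by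
    have h1 : ((p:ℤ))^(2*k-2) ≠ 0 := by positivity
    have h2 : (d:ℤ) ≠ 0 := by positivity
    rcases hε with rfl | rfl <;> simp [hc, h1, h2] <;> omega
  -- coefficients
  have hSmdeg : Sm.natDegree ≤ m - 1 := natDegree_sum_pow _ _
  have hSmcoeff : Sm.coeff (m-1) = 1 := coeff_sum_pow _ _ hm1
  have hcoeffm1 : F.coeff (m-1) = 1 := by
    rw [hFdef, coeff_add, hSmcoeff, coeff_C_mul, coeff_X_pow, if_neg (by omega), mul_zero,
      add_zero]
  have hcoeffm : F.coeff m = c := by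
    rw [hFdef, coeff_add, coeff_eq_zero_of_natDegree_lt (lt_of_le_of_lt hSmdeg (by omega)),
      coeff_C_mul, coeff_X_pow, if_pos rfl, mul_one, zero_add]
  have hFdeg : F.natDegree = m := by
    apply le_antisymm
    · rw [hFdef]
      apply natDegree_add_le_iff_left _ _ (natDegree_C_mul_X_pow_le c m) |>.mpr
      exact hSmdeg.trans (by omega)
    · exact le_natDegree_of_ne_zero (by rw [hcoeffm]; exact hc0)
  have hFlc : F.leadingCoeff = c := by rw [leadingCoeff, hFdeg, hcoeffm]
  have hF0 : F ≠ 0 := by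
    intro hz
    rw [hz] at hcoeffm1
    simp at hcoeffm1
  -- eval at 0
  have hFeval0 : F.eval 0 = ∑ j ∈ Icc 1 (m-1), (-(p:ℤ))^j := by
    rw [hFdef, eval_add, eval_mul, eval_C, eval_pow, eval_X, zero_pow (by omega : m ≠ 0),
      mul_zero, add_zero, hSm, eval_finset_sum]
    exact Finset.sum_congr rfl fun j hj => by rw [eval_pow, eval_sub, eval_X, eval_C, zero_sub]
  have h00 : F.eval 0 ≠ 0 := by
    rw [hFeval0]
    exact alt_sum_ne_zero p hp2 (m-1) hm1
  -- eval at p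
  have hFevalp : F.eval (p:ℤ) = ε * (p:ℤ)^(2*k-2+m) * d := by
    rw [hFdef, eval_add, eval_mul, eval_C, eval_pow, eval_X, hSm, eval_finset_sum]
    rw [Finset.sum_eq_zero (fun j hj => by
      rw [eval_pow, eval_sub, eval_X, eval_C, sub_self]
      exact zero_pow (by have := (Finset.mem_Icc.mp hj).1; omega))]
    rw [zero_add, hc, pow_add]
    ring
  -- complex root bound
  have haev : ∀ z : ℂ, (aeval z) F
      = (∑ j ∈ Icc 1 (m-1), (z - (p:ℂ))^j) + (ε:ℂ) * (p:ℂ)^(2*k-2) * (d:ℂ) * z^m := by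
    intro z
    rw [hFdef, hSm, hc]
    simp only [map_add, map_mul, map_pow, map_sum, map_sub, aeval_X, aeval_C,
      algebraMap_int_eq, eq_intCast, map_intCast, map_natCast]
  have hroots : ∀ z : ℂ, (aeval z) F = 0 → ‖z‖ < 1 := by
    intro z hz
    by_contra hge'
    push_neg at hge'
    have hge : 1 ≤ ‖z‖ := hge'
    rw [haev z] at hz
    have heq : (ε:ℂ) * (p:ℂ)^(2*k-2) * (d:ℂ) * z^m
        = -(∑ j ∈ Icc 1 (m-1), (z - (p:ℂ))^j) := by linear_combination hz
    have hL : ‖(ε:ℂ) * (p:ℂ)^(2*k-2) * (d:ℂ) * z^m‖ = (p:ℝ)^(2*k-2) * (d:ℝ) * ‖z‖^m := by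
      rcases hε with rfl | rfl <;>
        simp [norm_mul, norm_pow, Complex.norm_natCast]
    have hsum : ‖∑ j ∈ Icc 1 (m-1), (z - (p:ℂ))^j‖
        ≤ (∑ j ∈ Icc 1 (m-1), ((1:ℝ)+p)^j) * ‖z‖^m := by
      calc ‖∑ j ∈ Icc 1 (m-1), (z - (p:ℂ))^j‖
          ≤ ∑ j ∈ Icc 1 (m-1), ‖(z - (p:ℂ))^j‖ := norm_sum_le _ _
        _ ≤ ∑ j ∈ Icc 1 (m-1), ((1:ℝ)+p)^j * ‖z‖^m := by
            apply Finset.sum_le_sum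
            intro j hj
            obtain ⟨hj1, hj2⟩ := Finset.mem_Icc.mp hj
            rw [norm_pow]
            have h1 : ‖z - (p:ℂ)‖ ≤ (1+(p:ℝ)) * ‖z‖ := by
              have hp0 : (0:ℝ) ≤ p := Nat.cast_nonneg p
              calc ‖z - (p:ℂ)‖ ≤ ‖z‖ + ‖(p:ℂ)‖ := norm_sub_le _ _
                _ = ‖z‖ + p := by rw [Complex.norm_natCast]
                _ ≤ ‖z‖ + p * ‖z‖ := by nlinarith
                _ = (1+(p:ℝ)) * ‖z‖ := by ring
            calc ‖z - (p:ℂ)‖^j ≤ ((1+(p:ℝ)) * ‖z‖)^j := pow_le_pow_left₀ (norm_nonneg _) h1 j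
              _ = (1+(p:ℝ))^j * ‖z‖^j := mul_pow _ _ _
              _ ≤ (1+(p:ℝ))^j * ‖z‖^m := by
                  apply mul_le_mul_of_nonneg_left (pow_le_pow_right₀ hge (by omega))
                  positivity
        _ = (∑ j ∈ Icc 1 (m-1), ((1:ℝ)+p)^j) * ‖z‖^m := by rw [Finset.sum_mul]
    have hT : (∑ j ∈ Icc 1 (m-1), ((1:ℝ)+p)^j) < (p:ℝ)^(2*k-2) * d := by
      have hnat := geom_bound p hp2 (m-1) hm1
      have hp1 : (1:ℝ) ≤ (p:ℝ) := by exact_mod_cast (by omega : 1 ≤ p)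
      calc (∑ j ∈ Icc 1 (m-1), ((1:ℝ)+p)^j)
          = ((∑ j ∈ Icc 1 (m-1), (1+p)^j : ℕ) : ℝ) := by push_cast; rfl
        _ < ((p ^ (2*(m-1)) : ℕ) : ℝ) := by exact_mod_cast hnat
        _ = (p:ℝ)^(2*(m-1)) := by push_cast; rfl
        _ ≤ (p:ℝ)^(2*k-2) := pow_le_pow_right₀ hp1 (by omega)
        _ ≤ (p:ℝ)^(2*k-2) * d := le_mul_of_one_le_right (by positivity)
            (by exact_mod_cast hd)
    have hzm : (0:ℝ) < ‖z‖^m := pow_pos (lt_of_lt_of_le one_pos hge) m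
    have hfin : (p:ℝ)^(2*k-2) * d * ‖z‖^m
        ≤ (∑ j ∈ Icc 1 (m-1), ((1:ℝ)+p)^j) * ‖z‖^m := by
      rw [← hL, heq, norm_neg]
      exact hsum
    have := mul_lt_mul_of_pos_right hT hzm
    linarith
  -- mod p
  set φ : ℤ →+* ZMod p := Int.castRingHom (ZMod p) with hφ
  have hφp : ((p:ℤ) : ZMod p) = 0 := by
    push_cast
    exact ZMod.natCast_self p
  have hmapF : F.map φ = ∑ j ∈ Icc 1 (m-1), (X - C (0 : ZMod p))^j := by
    rw [hFdef, Polynomial.map_add, Polynomial.map_mul, Polynomial.map_pow, Polynomial.map_C,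
      Polynomial.map_X, hSm]
    have hcz : φ c = 0 := by
      rw [hc, hφ]
      push_cast
      simp [ZMod.natCast_self, zero_pow (show 2*k-2 ≠ 0 by omega)]
    rw [hcz, map_zero, zero_mul, add_zero]
    rw [Polynomial.map_sum]
    exact Finset.sum_congr rfl fun j hj => by
      rw [Polynomial.map_pow, Polynomial.map_sub, Polynomial.map_X, Polynomial.map_C, hφ]
      norm_num [hφp]
  have hmapFdeg : (F.map φ).natDegree = m - 1 := by
    apply le_antisymm
    · rw [hmapF]; exact natDegree_sum_pow _ _
    · apply le_natDegree_of_ne_zero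
      rw [hmapF, coeff_sum_pow _ _ hm1]
      exact one_ne_zero
  have hmapF0 : F.map φ ≠ 0 := by
    intro hz
    rw [hz] at hmapFdeg
    simp at hmapFdeg
    omega
  -- irreducibility
  refine ⟨?_, ?_⟩
  · intro hu
    have h0 := natDegree_eq_zero_of_isUnit hu
    rw [hFdeg] at h0
    omega
  · intro g h hgh
    by_contra hcon
    push_neg at hcon
    obtain ⟨hgu, hhu⟩ := hcon
    have hg0 : g ≠ 0 := by rintro rfl; rw [zero_mul] at hgh; exact hF0 hgh
    have hh0 : h ≠ 0 := by rintro rfl; rw [mul_zero] at hgh; exact hF0 hgh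
    have hconst : ∀ q r : Polynomial ℤ, F = q * r → q.natDegree = 0 → IsUnit q := by
      intro q r hqr h0
      have hqC := eq_C_of_natDegree_eq_zero h0
      have hdvd : q.coeff 0 ∣ F.coeff (m-1) := by
        rw [hqr, hqC, coeff_C_mul, coeff_C_zero]
        exact dvd_mul_right _ _
      rw [hcoeffm1] at hdvd
      rw [hqC]
      exact isUnit_C.mpr (isUnit_of_dvd_one hdvd)
    have hgd1 : 1 ≤ g.natDegree := by
      rcases Nat.eq_zero_or_pos g.natDegree with h0 | h1
      · exact absurd (hconst g h hgh h0) hgu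
      · exact h1
    have hhd1 : 1 ≤ h.natDegree := by
      rcases Nat.eq_zero_or_pos h.natDegree with h0 | h1
      · exact absurd (hconst h g (hgh.trans (mul_comm g h)) h0) hhu
      · exact h1
    have hsum : g.natDegree + h.natDegree = m := by
      rw [← hFdeg, hgh, natDegree_mul hg0 hh0]
    -- mod p degrees
    have hmg0 : g.map φ ≠ 0 := by
      intro hz
      apply hmapF0
      rw [hgh, Polynomial.map_mul, hz, zero_mul]
    have hmh0 : h.map φ ≠ 0 := by
      intro hz
      apply hmapF0
      rw [hgh, Polynomial.map_mul, hz, mul_zero]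
    have hdegs : (g.map φ).natDegree + (h.map φ).natDegree = m - 1 := by
      have h2 : ((g.map φ) * (h.map φ)).natDegree = m - 1 := by
        rw [← Polynomial.map_mul, ← hgh, hmapFdeg]
      rw [natDegree_mul hmg0 hmh0] at h2
      exact h2
    have hmgle : (g.map φ).natDegree ≤ g.natDegree := natDegree_map_le
    have hmhle : (h.map φ).natDegree ≤ h.natDegree := natDegree_map_le
    have hlcof : ∀ q : Polynomial ℤ, q.map φ ≠ 0 → (q.map φ).natDegree = q.natDegree →
        ¬ (p:ℤ) ∣ q.leadingCoeff := by
      intro q hmq hdeg hdvd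
      have hz : (q.map φ).leadingCoeff = 0 := by
        rw [leadingCoeff, hdeg, coeff_map, hφ]
        exact (ZMod.intCast_zmod_eq_zero_iff_dvd _ _).mpr hdvd
      exact hmq (leadingCoeff_eq_zero.mp hz)
    have hfull : (g.map φ).natDegree = g.natDegree ∨ (h.map φ).natDegree = h.natDegree := by
      omega
    rcases hfull with hfull | hfull
    · exact key p d hp hd hdp ε hε (2*k-2) (2*k-2+m) F g h hgh hgd1 hh0 hFlc h00 hFevalp
        hroots (hlcof g hmg0 hfull)
    · exact key p d hp hd hdp ε hε (2*k-2) (2*k-2+m) F h g (hgh.trans (mul_comm g h)) hhd1 hg0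
        hFlc h00 hFevalp hroots (hlcof h hmh0 hfull)
end

section
/- Let m ≥ 3, 2 ≤ j ≤ m - 1, k ≥ 3m - 2j, p prime, and 1 ≤ d ≤ p - 1. Then the polynomial F_6 = (p^m - p) + z ± (p^k d) z^j - z^m is irreducible in ℤ[z]. -/
open Polynomial

private lemma aux_root_bound (m j k p d : ℕ) (hm : 3 ≤ m) (hj : 2 ≤ j) (hjm : j < m)
    (hk : m + 2 * (m - j) ≤ k) (hp2 : 2 ≤ p) (hd : 1 ≤ d)
    (ε : ℤ) (hε : ε = 1 ∨ ε = -1) (z : ℂ)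
    (hz : z ^ m - ((ε * (p : ℤ) ^ k * d : ℤ) : ℂ) * z ^ j - z - (((p : ℤ) ^ m - p : ℤ) : ℂ) = 0) :
    ‖z‖ < 1 ∨ (p : ℝ) ^ 2 ≤ ‖z‖ := by
  rcases lt_or_ge (‖z‖) 1 with h | h
  · exact Or.inl h
  right
  set r : ℝ := ‖z‖ with hr
  have hp1 : (1 : ℝ) ≤ (p : ℝ) := by exact_mod_cast Nat.one_le_of_lt hp2
  have hp2' : (2 : ℝ) ≤ (p : ℝ) := by exact_mod_cast hp2
  have hd1 : (1 : ℝ) ≤ (d : ℝ) := by exact_mod_cast hd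
  have hr0 : (0 : ℝ) ≤ r := norm_nonneg z
  have hrm : r ≤ r ^ m := le_self_pow₀ h (by omega)
  have hrm1 : (1 : ℝ) ≤ r ^ m := le_trans h hrm
  have hcR : (0 : ℝ) ≤ (p : ℝ) ^ m - p := by
    have : (p : ℝ) ^ 1 ≤ (p : ℝ) ^ m := pow_le_pow_right₀ hp1 (by omega)
    simpa using this
  have heq : ((ε * (p : ℤ) ^ k * d : ℤ) : ℂ) * z ^ j = z ^ m - z - (((p : ℤ) ^ m - p : ℤ) : ℂ) := by
    linear_combination -hz
  have habsA : ‖((ε * (p : ℤ) ^ k * d : ℤ) : ℂ)‖ = (p : ℝ) ^ k * d := by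
    rcases hε with h1 | h1 <;> subst h1 <;>
      · push_cast
        simp [norm_mul, Complex.norm_natCast, norm_pow]
  have hstep1 : (p : ℝ) ^ k * d * r ^ j ≤ r ^ m + r + ((p : ℝ) ^ m - p) := by
    have h1 : ‖((ε * (p : ℤ) ^ k * d : ℤ) : ℂ) * z ^ j‖ = (p : ℝ) ^ k * d * r ^ j := by
      rw [norm_mul, habsA, norm_pow]
    have h2 : ‖z ^ m - z - (((p : ℤ) ^ m - p : ℤ) : ℂ)‖
        ≤ r ^ m + r + ((p : ℝ) ^ m - p) := by
      refine le_trans (norm_sub_le _ _) ?_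
      have h3 : ‖z ^ m - z‖ ≤ r ^ m + r :=
        le_trans (norm_sub_le _ _) (by rw [norm_pow])
      have h4 : ‖(((p : ℤ) ^ m - p : ℤ) : ℂ)‖ = (p : ℝ) ^ m - p := by
        rw [Complex.norm_intCast]
        push_cast
        exact abs_of_nonneg hcR
      linarith
    rw [← h1, heq]
    exact h2
  -- hence p^k * r^j ≤ p^m * r^m
  have hstep2 : (p : ℝ) ^ k * r ^ j ≤ (p : ℝ) ^ m * (r ^ (m - j) * r ^ j) := by
    have hA : (p : ℝ) ^ k * r ^ j ≤ (p : ℝ) ^ k * d * r ^ j := by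
      have hpk : (0 : ℝ) ≤ (p : ℝ) ^ k := by positivity
      exact mul_le_mul_of_nonneg_right (le_mul_of_one_le_right hpk hd1) (pow_nonneg hr0 j)
    have hB : r ^ m + r + ((p : ℝ) ^ m - p) ≤ ((p : ℝ) ^ m) * r ^ m := by
      nlinarith [mul_le_mul_of_nonneg_right (show (2 : ℝ) + ((p:ℝ)^m - p) ≤ (p:ℝ)^m by nlinarith) (le_trans zero_le_one hrm1)]
    have hC : r ^ (m - j) * r ^ j = r ^ m := by
      rw [← pow_add]
      congr 1
      omega
    rw [hC]
    linarith
  have hrj : (0 : ℝ) < r ^ j := pow_pos (by linarith) j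
  have hstep3 : (p : ℝ) ^ k ≤ (p : ℝ) ^ m * r ^ (m - j) := by
    have := le_of_mul_le_mul_right (by linarith [hstep2] : (p : ℝ) ^ k * r ^ j ≤ ((p : ℝ) ^ m * r ^ (m - j)) * r ^ j) hrj
    exact this
  have hpk_ge : (p : ℝ) ^ m * ((p : ℝ) ^ 2) ^ (m - j) ≤ (p : ℝ) ^ k := by
    calc (p : ℝ) ^ m * ((p : ℝ) ^ 2) ^ (m - j) = (p : ℝ) ^ (m + 2 * (m - j)) := by
          rw [pow_add, ← pow_mul]
      _ ≤ (p : ℝ) ^ k := pow_le_pow_right₀ hp1 hk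
  have hfin : ((p : ℝ) ^ 2) ^ (m - j) ≤ r ^ (m - j) := by
    have hpm : (0 : ℝ) < (p : ℝ) ^ m := by positivity
    have := le_trans hpk_ge hstep3
    exact le_of_mul_le_mul_left this hpm
  by_contra hcon
  push_neg at hcon
  have : r ^ (m - j) < ((p : ℝ) ^ 2) ^ (m - j) :=
    pow_lt_pow_left₀ hcon (by positivity) (by omega)
  linarith

private noncomputable def auxQ (m j k p d : ℕ) (ε : ℤ) : ℤ[X] :=
  X ^ m - C (ε * (p : ℤ) ^ k * d) * X ^ j - X - C ((p : ℤ) ^ m - p)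

private lemma auxQ_monic (m j k p d : ℕ) (ε : ℤ) (hm : 3 ≤ m) (hjm : j < m) :
    (auxQ m j k p d ε).Monic := by
  unfold auxQ
  monicity!
  · simp [show m ⊔ j ⊔ 1 = m from by omega, show m ≠ j from by omega,
      show ¬(m ≤ 1 ∧ j ≤ 1) from by omega,
      show max m (max j 1) = m from by omega, show j ≤ m ∧ 1 ≤ m from by omega, show 1 ≠ m from by omega]

private lemma auxQ_natDegree (m j k p d : ℕ) (ε : ℤ) (hm : 3 ≤ m) (hjm : j < m) :
    (auxQ m j k p d ε).natDegree = m := by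
  unfold auxQ
  compute_degree!
  next =>
    simp [show m ≠ j from by omega, show 1 ≠ m from by omega, show m ≠ 0 from by omega]
  all_goals omega

private lemma auxQ_eval_p (m j k p d : ℕ) (ε : ℤ) :
    (auxQ m j k p d ε).eval (p : ℤ) = -(ε * d * (p : ℤ) ^ (k + j)) := by
  simp [auxQ]
  ring

private lemma auxQ_eval_zero (m j k p d : ℕ) (ε : ℤ) (hm : 3 ≤ m) (hj : 2 ≤ j) :
    (auxQ m j k p d ε).eval 0 = -((p : ℤ) ^ m - p) := by
  simp [auxQ, zero_pow (by omega : m ≠ 0), zero_pow (by omega : j ≠ 0)]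

private lemma aux_prod_le_one (s : Multiset ℝ) (h : ∀ x ∈ s, 0 ≤ x ∧ x ≤ 1) : s.prod ≤ 1 := by
  induction s using Multiset.induction_on with
  | empty => simp
  | cons a t ih =>
    simp only [Multiset.prod_cons]
    have ha := h a (Multiset.mem_cons_self a t)
    have ht : t.prod ≤ 1 := ih (fun x hx => h x (Multiset.mem_cons_of_mem hx))
    have ht0 : 0 ≤ t.prod := Multiset.prod_nonneg (fun x hx => (h x (Multiset.mem_cons_of_mem hx)).1)
    nlinarith [ha.1, ha.2]
private lemma aux_factor (m j k p d : ℕ) (hm : 3 ≤ m) (hj : 2 ≤ j) (hjm : j < m)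
    (hk : m + 2 * (m - j) ≤ k) (hp : p.Prime) (hd : 1 ≤ d) (hdp : d ≤ p - 1)
    (ε : ℤ) (hε : ε = 1 ∨ ε = -1) (b : ℤ[X]) (hbm : b.Monic) (hb1 : 1 ≤ b.natDegree)
    (hbd : b ∣ auxQ m j k p d ε) (hbp : ¬ ((p : ℤ) ∣ b.eval (p : ℤ))) : False := by
  have hp2 : 2 ≤ p := hp.two_le
  have hp2' : (2 : ℝ) ≤ (p : ℝ) := by exact_mod_cast hp2
  -- arithmetic part : |b.eval p| ≤ d
  have h2 : b.eval (p : ℤ) ∣ (d : ℤ) * (p : ℤ) ^ (k + j) := by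
    have h0 : b.eval (p : ℤ) ∣ (auxQ m j k p d ε).eval (p : ℤ) := eval_dvd hbd
    rw [auxQ_eval_p] at h0
    rcases hε with rfl | rfl
    · simpa [dvd_neg] using h0
    · simpa using h0
  have hPp : Prime ((p : ℤ)) := Nat.prime_iff_prime_int.1 hp
  have hcop : IsCoprime (b.eval (p : ℤ)) ((p : ℤ) ^ (k + j)) :=
    ((hPp.coprime_iff_not_dvd.mpr hbp).symm).pow_right
  have hdd : b.eval (p : ℤ) ∣ (d : ℤ) := hcop.dvd_of_dvd_mul_right h2
  have habs_le : |b.eval (p : ℤ)| ≤ (d : ℤ) :=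
    Int.le_of_dvd (by exact_mod_cast hd) ((abs_dvd _ _).mpr hdd)
  -- complex part
  set bC := b.map (Int.castRingHom ℂ) with hbC
  have hbCm : bC.Monic := hbm.map _
  have hQm := auxQ_monic m j k p d ε hm hjm
  have hQCne : (auxQ m j k p d ε).map (Int.castRingHom ℂ) ≠ 0 := (hQm.map _).ne_zero
  have hQCdvd : bC ∣ (auxQ m j k p d ε).map (Int.castRingHom ℂ) := Polynomial.map_dvd _ hbd
  have hroots_le : bC.roots ≤ ((auxQ m j k p d ε).map (Int.castRingHom ℂ)).roots :=
    roots.le_of_dvd hQCne hQCdvd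
  have hroot_prop : ∀ z ∈ bC.roots, ‖z‖ < 1 ∨ (p : ℝ) ^ 2 ≤ ‖z‖ := by
    intro z hz
    have hz2 := Multiset.mem_of_le hroots_le hz
    have hz3 : ((auxQ m j k p d ε).map (Int.castRingHom ℂ)).IsRoot z :=
      ((mem_roots hQCne).1 hz2)
    have hz4 : z ^ m - ((ε * (p : ℤ) ^ k * d : ℤ) : ℂ) * z ^ j - z
        - (((p : ℤ) ^ m - p : ℤ) : ℂ) = 0 := by
      have := hz3
      simp only [auxQ, IsRoot, Polynomial.map_sub, Polynomial.map_pow, Polynomial.map_mul,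
        map_X, map_C, eval_sub, eval_pow, eval_mul, eval_X, eval_C] at this
      convert this using 2 <;> push_cast [eq_intCast] <;> ring
    exact aux_root_bound m j k p d hm hj hjm hk hp2 hd ε hε z hz4
  have hcard : bC.roots.card = b.natDegree := by
    rw [← hbm.natDegree_map (Int.castRingHom ℂ)]
    exact splits_iff_card_roots.mp (IsAlgClosed.splits _)
  have hevalP : ∀ x : ℂ, bC.eval x = (bC.roots.map (fun z => x - z)).prod := by
    intro x
    conv_lhs => rw [(IsAlgClosed.splits bC).eq_prod_roots_of_monic hbCm]
    rw [eval_multiset_prod, Multiset.map_map]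
    simp
  have habsP : ∀ n : ℤ, |((b.eval n : ℤ) : ℝ)|
      = (bC.roots.map (fun z => ‖(n : ℂ) - z‖)).prod := by
    intro n
    have h1 : bC.eval ((n : ℤ) : ℂ) = ((b.eval n : ℤ) : ℂ) := eval_intCast_map _ b n
    calc |((b.eval n : ℤ) : ℝ)| = ‖((b.eval n : ℤ) : ℂ)‖ := by
          rw [Complex.norm_intCast]
      _ = ‖bC.eval ((n : ℤ) : ℂ)‖ := by rw [h1]
      _ = (bC.roots.map (fun z => ‖(n : ℂ) - z‖)).prod := by
          rw [hevalP]
          exact (map_multiset_prod (normHom (α := ℂ)) _).trans (by rw [Multiset.map_map]; rfl)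
  by_cases hbig : ∃ z ∈ bC.roots, (p : ℝ) ^ 2 ≤ ‖z‖
  · -- there is a big root : |b.eval p| is large, contradiction with ≤ d
    obtain ⟨z₀, hz₀m, hz₀⟩ := hbig
    have hxabs : ‖((p : ℤ) : ℂ)‖ = (p : ℝ) := by
      rw [Complex.norm_intCast]
      push_cast
      exact abs_of_nonneg (by positivity)
    have hfact : ∀ z ∈ bC.roots, 1 ≤ ‖((p : ℤ) : ℂ) - z‖ := by
      intro z hz
      have hlb : ‖((p : ℤ) : ℂ)‖ - ‖z‖
          ≤ ‖((p : ℤ) : ℂ) - z‖ := by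
        simpa using norm_sub_norm_le (((p : ℤ) : ℂ)) z
      have hlb2 : ‖z‖ - ‖((p : ℤ) : ℂ)‖
          ≤ ‖((p : ℤ) : ℂ) - z‖ := by
        rw [norm_sub_rev]
        simpa using norm_sub_norm_le z (((p : ℤ) : ℂ))
      rcases hroot_prop z hz with hs | hbigz
      · rw [hxabs] at hlb; linarith
      · rw [hxabs] at hlb2; nlinarith
    have hbig0 : (p : ℝ) ^ 2 - p ≤ ‖((p : ℤ) : ℂ) - z₀‖ := by
      have hlb2 : ‖z₀‖ - ‖((p : ℤ) : ℂ)‖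
          ≤ ‖((p : ℤ) : ℂ) - z₀‖ := by
        rw [norm_sub_rev]
        simpa using norm_sub_norm_le z₀ (((p : ℤ) : ℂ))
      rw [hxabs] at hlb2; linarith
    set M : Multiset ℝ := bC.roots.map (fun z => ‖((p : ℤ) : ℂ) - z‖) with hM
    have hx₀ : ‖((p : ℤ) : ℂ) - z₀‖ ∈ M := Multiset.mem_map_of_mem _ hz₀m
    have hMer : (M.erase (‖((p : ℤ) : ℂ) - z₀‖)).prod ≥ 1 := by
      apply Multiset.one_le_prod
      intro y hy
      obtain ⟨z, hzm, rfl⟩ := Multiset.mem_map.1 (Multiset.mem_of_mem_erase hy)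
      exact hfact z hzm
    have hprodlb : (p : ℝ) ^ 2 - p ≤ M.prod := by
      rw [← Multiset.cons_erase hx₀, Multiset.prod_cons]
      calc (p : ℝ) ^ 2 - p ≤ ‖((p : ℤ) : ℂ) - z₀‖ * 1 := by
            rw [mul_one]; exact hbig0
        _ ≤ _ := by
            apply mul_le_mul_of_nonneg_left hMer (norm_nonneg _)
    have hub : M.prod ≤ (d : ℝ) := by
      rw [← habsP (p : ℤ)]
      calc |((b.eval (p : ℤ) : ℤ) : ℝ)| = ((|b.eval (p : ℤ)| : ℤ) : ℝ) := by
            rw [Int.cast_abs]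
        _ ≤ (d : ℝ) := by exact_mod_cast habs_le
    have hdR : (d : ℝ) ≤ (p : ℝ) - 1 := by
      have : (d : ℝ) ≤ ((p - 1 : ℕ) : ℝ) := by exact_mod_cast hdp
      rw [Nat.cast_sub (by omega)] at this
      simpa using this
    nlinarith
  · -- all roots are small : b.eval 0 = 0, contradiction
    push_neg at hbig
    have hsmall : ∀ z ∈ bC.roots, ‖z‖ < 1 := by
      intro z hz
      rcases hroot_prop z hz with h | h
      · exact h
      · exact absurd h (by push_neg; exact lt_of_le_of_lt (le_of_lt (hbig z hz)) (by linarith [hbig z hz]))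
    have hb0 : b.eval 0 ∣ (auxQ m j k p d ε).eval 0 := eval_dvd hbd
    rw [auxQ_eval_zero m j k p d ε hm hj] at hb0
    have hppm : (p : ℤ) < (p : ℤ) ^ m := by
      have : p ^ 1 < p ^ m := Nat.pow_lt_pow_right (by omega) (by omega)
      exact_mod_cast (by simpa using this : p < p ^ m)
    have hb0ne : b.eval 0 ≠ 0 := by
      intro h0
      rw [h0] at hb0
      have := zero_dvd_iff.mp hb0
      omega
    have h1le : (1 : ℝ) ≤ |((b.eval 0 : ℤ) : ℝ)| := by
      have := Int.one_le_abs hb0ne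
      calc (1 : ℝ) ≤ ((|b.eval 0| : ℤ) : ℝ) := by exact_mod_cast this
        _ = |((b.eval 0 : ℤ) : ℝ)| := by rw [Int.cast_abs]
    have hlt : |((b.eval 0 : ℤ) : ℝ)| < 1 := by
      rw [habsP 0]
      have hne0 : bC.roots ≠ 0 := by
        intro h0
        rw [h0] at hcard
        simp at hcard
        omega
      obtain ⟨a0, ha0⟩ := Multiset.exists_mem_of_ne_zero hne0
      obtain ⟨t, hat⟩ := Multiset.exists_cons_of_mem
        (Multiset.mem_map_of_mem (fun z => ‖((0 : ℤ) : ℂ) - z‖) ha0)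
      set a := ‖((0 : ℤ) : ℂ) - a0‖ with hadef
      rw [hat, Multiset.prod_cons]
      have hmemM : ∀ y ∈ bC.roots.map (fun z => ‖((0 : ℤ) : ℂ) - z‖), 0 ≤ y ∧ y < 1 := by
        intro y hy
        obtain ⟨z, hzm, rfl⟩ := Multiset.mem_map.1 hy
        refine ⟨norm_nonneg _, ?_⟩
        simpa using hsmall z hzm
      have ha := hmemM a (by rw [hat]; exact Multiset.mem_cons_self a t)
      have ht : t.prod ≤ 1 := aux_prod_le_one t (by
        intro y hy
        have := hmemM y (by rw [hat]; exact Multiset.mem_cons_of_mem hy)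
        exact ⟨this.1, le_of_lt this.2⟩)
      have ht0 : 0 ≤ t.prod := Multiset.prod_nonneg (fun y hy =>
        (hmemM y (by rw [hat]; exact Multiset.mem_cons_of_mem hy)).1)
      calc a * t.prod ≤ a * 1 := mul_le_mul_of_nonneg_left ht ha.1
        _ = a := mul_one a
        _ < 1 := ha.2
    linarith

private lemma aux_irred (m j k p d : ℕ) (hm : 3 ≤ m) (hj : 2 ≤ j) (hjm : j < m)
    (hk : m + 2 * (m - j) ≤ k) (hp : p.Prime) (hd : 1 ≤ d) (hdp : d ≤ p - 1)
    (ε : ℤ) (hε : ε = 1 ∨ ε = -1) : Irreducible (auxQ m j k p d ε) := by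
  have hQm := auxQ_monic m j k p d ε hm hjm
  have hQdeg := auxQ_natDegree m j k p d ε hm hjm
  have hp2 : 2 ≤ p := hp.two_le
  have key : ∀ a b : ℤ[X], a.Monic → b.Monic → auxQ m j k p d ε = a * b →
      IsUnit a ∨ IsUnit b := by
    intro a b ham hbm hab
    by_cases hA : a.natDegree = 0
    · left
      rw [ham.natDegree_eq_zero] at hA
      rw [hA]; exact isUnit_one
    by_cases hB : b.natDegree = 0
    · right
      rw [hbm.natDegree_eq_zero] at hB
      rw [hB]; exact isUnit_one
    exfalso
    have hone : ¬((p : ℤ) ∣ a.eval (p : ℤ)) ∨ ¬((p : ℤ) ∣ b.eval (p : ℤ)) := by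
      by_contra hcon
      push_neg at hcon
      obtain ⟨hpa, hpb⟩ := hcon
      have ha0 : (p : ℤ) ∣ a.eval 0 := by
        have h1 := sub_dvd_eval_sub (p : ℤ) 0 a
        simp only [sub_zero] at h1
        simpa using dvd_sub hpa h1
      have hb0 : (p : ℤ) ∣ b.eval 0 := by
        have h1 := sub_dvd_eval_sub (p : ℤ) 0 b
        simp only [sub_zero] at h1
        simpa using dvd_sub hpb h1
      have hsq : (p : ℤ) ^ 2 ∣ (auxQ m j k p d ε).eval 0 := by
        rw [hab, eval_mul, sq]
        exact mul_dvd_mul ha0 hb0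
      rw [auxQ_eval_zero m j k p d ε hm hj] at hsq
      have h2 : (p : ℤ) ^ 2 ∣ ((p : ℤ) ^ m - p) := dvd_neg.mp hsq
      have h3 : (p : ℤ) ^ 2 ∣ (p : ℤ) ^ m := pow_dvd_pow _ (by omega)
      have h4 : (p : ℤ) ^ 2 ∣ (p : ℤ) := by
        have h5 := dvd_sub h3 h2
        simpa using h5
      have h6 : (p : ℤ) ^ 2 ≤ (p : ℤ) := Int.le_of_dvd (by exact_mod_cast (by omega : 0 < p)) h4
      have hp2' : (2 : ℤ) ≤ (p : ℤ) := by exact_mod_cast hp2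
      nlinarith
    rcases hone with h | h
    · exact aux_factor m j k p d hm hj hjm hk hp hd hdp ε hε a ham (by omega)
        ⟨b, hab⟩ h
    · exact aux_factor m j k p d hm hj hjm hk hp hd hdp ε hε b hbm (by omega)
        ⟨a, by rw [hab, mul_comm]⟩ h
  constructor
  · rw [hQm.isUnit_iff]
    intro h
    rw [h, natDegree_one] at hQdeg
    omega
  · intro a b hab
    have hlc : a.leadingCoeff * b.leadingCoeff = 1 := by
      rw [← leadingCoeff_mul, ← hab]
      exact hQm
    rcases Int.mul_eq_one_iff_eq_one_or_neg_one.mp hlc with ⟨ha1, hb1⟩ | ⟨ha1, hb1⟩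
    · exact key a b ha1 hb1 hab
    · have ham : (-a).Monic := by
        rw [Monic, leadingCoeff_neg, ha1]; ring
      have hbm : (-b).Monic := by
        rw [Monic, leadingCoeff_neg, hb1]; ring
      have hab' : auxQ m j k p d ε = (-a) * (-b) := by
        rw [neg_mul_neg]; exact hab
      rcases key (-a) (-b) ham hbm hab' with h | h
      · exact Or.inl (IsUnit.neg_iff a |>.mp h)
      · exact Or.inr (IsUnit.neg_iff b |>.mp h)

open Polynomial in
theorem stmt_19 (m j k : ℕ) (hm : 3 ≤ m) (hj : 2 ≤ j) (hjm : j ≤ m - 1)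
    (hk : 3 * m - 2 * j ≤ k)
    (p : ℕ) (hp : p.Prime) (d : ℕ) (hd : 1 ≤ d) (hdp : d ≤ p - 1)
    (ε : ℤ) (hε : ε = 1 ∨ ε = -1) :
    Irreducible
      (C ((p : ℤ) ^ m - p) + X + C (ε * (p : ℤ) ^ k * d) * X ^ j
        - X ^ m) := by
  have hjm' : j < m := by omega
  have hk' : m + 2 * (m - j) ≤ k := by omega
  have hQ := aux_irred m j k p d hm hj hjm' hk' hp hd hdp ε hε
  have hassoc : Associated (auxQ m j k p d ε)
      (C ((p : ℤ) ^ m - p) + X + C (ε * (p : ℤ) ^ k * d) * X ^ j - X ^ m) := by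
    refine ⟨-1, ?_⟩
    have : ((-1 : (ℤ[X])ˣ) : ℤ[X]) = -1 := by simp
    rw [this]
    unfold auxQ
    ring
  exact hassoc.irreducible hQ
end
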